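/- arXiv:2212.08928 — 3 statements merged into one kernel-verified Lean document; each statement's English description precedes it below -/
import Mathlib

section
/- In Ãₙ, the elements pᵢ = a_{i+1}⋯a_{i−1} satisfy pᵢpⱼ = p_{j+1}p_{i−1} for all 1 ≤ i, j ≤ n+1 (indices mod n+1). -/
open CoxeterMatrix

/-- The affine Coxeter matrix of type Ãₙ on the cyclic index set `ZMod (n+1)`:
`aᵢ² = 1`, `(aᵢa_{i+1})³ = 1`, and non-adjacent generators (mod n+1) commute. -/
def affineA (n : ℕ) : CoxeterMatrix (ZMod (n + 1)) where
  M := fun i j => if i = j then 1 else if i = j + 1 ∨ j = i + 1 then 3 else 2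
  isSymm := by
    ext i j
    by_cases h : i = j
    · simp [Matrix.transpose, Matrix.of_apply, h]
    · simp only [Matrix.transpose, Matrix.of_apply]
      rw [if_neg h, if_neg (Ne.symm h)]
      exact if_congr or_comm rfl rfl
  diagonal := fun i => by simp
  off_diagonal := fun i j h => by
    simp only [if_neg h]
    split <;> simp

/-- The Coxeter generators `aᵢ` of `Ãₙ`. -/
def aa (n : ℕ) (i : ZMod (n + 1)) : (affineA n).Group := (affineA n).simple i

/-- The cyclic products `pⱼ = a_{j+1} a_{j+2} ⋯ a_{j-1}` (indices mod `n+1`). -/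
def pp (n : ℕ) (j : ZMod (n + 1)) : (affineA n).Group :=
  ((List.range n).map fun k => aa n (j + 1 + (k : ℕ))).prod

/-- `gⱼ = pⱼ⁻¹ p_{j+1}`. -/
def gg (n : ℕ) (j : ZMod (n + 1)) : (affineA n).Group := (pp n j)⁻¹ * pp n (j + 1)

/-- The subgroup `N = ⟨pⱼ⁻¹pᵢ : i, j⟩` of `Ãₙ`. -/
def NN (n : ℕ) : Subgroup (affineA n).Group :=
  Subgroup.closure {x | ∃ i j : ZMod (n + 1), x = (pp n j)⁻¹ * pp n i}

/-- The standard parabolic subgroup `⟨a₁,…,aₙ⟩` of `Ãₙ` (all generators except `a_{n+1} = a₀`). -/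
def parab (n : ℕ) : Subgroup (affineA n).Group :=
  Subgroup.closure {x | ∃ i : ZMod (n + 1), i ≠ 0 ∧ x = aa n i}

-- Auxiliary development

lemma aa_sq (n : ℕ) (i : ZMod (n+1)) : aa n i * aa n i = 1 :=
  (affineA n).toCoxeterSystem.simple_mul_simple_self i

lemma aa_inv (n : ℕ) (i : ZMod (n+1)) : (aa n i)⁻¹ = aa n i :=
  (affineA n).toCoxeterSystem.inv_simple i

lemma oneNeZeroZM (n : ℕ) (hn : 2 ≤ n) : (1 : ZMod (n+1)) ≠ 0 := by
  have : Fact (1 < n + 1) := ⟨by omega⟩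
  exact one_ne_zero

lemma aa_braid (n : ℕ) (hn : 2 ≤ n) (i : ZMod (n+1)) :
    aa n i * aa n (i+1) * aa n i = aa n (i+1) * aa n i * aa n (i+1) := by
  have hne : i ≠ i + 1 := by
    intro h
    exact oneNeZeroZM n hn (by linear_combination -h)
  have hM : (affineA n) i (i+1) = 3 := by
    simp [affineA, hne]
  have h3 := (affineA n).toCoxeterSystem.simple_mul_simple_pow i (i+1)
  rw [hM] at h3
  have h3' : (aa n i * aa n (i+1)) * (aa n i * aa n (i+1)) * (aa n i * aa n (i+1)) = 1 := by
    have := h3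
    rw [pow_succ, pow_succ, pow_one] at this
    exact this
  have e : aa n i * aa n (i+1) * aa n i = (aa n (i+1) * aa n i * aa n (i+1))⁻¹ := by
    rw [eq_inv_iff_mul_eq_one]
    calc aa n i * aa n (i+1) * aa n i * (aa n (i+1) * aa n i * aa n (i+1))
        = (aa n i * aa n (i+1)) * (aa n i * aa n (i+1)) * (aa n i * aa n (i+1)) := by group
      _ = 1 := h3'
  rw [e]
  simp [mul_inv_rev, aa_inv, mul_assoc]

lemma aa_comm (n : ℕ) (i j : ZMod (n+1)) (h1 : i ≠ j) (h2 : i ≠ j + 1) (h3 : j ≠ i + 1) :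
    Commute (aa n i) (aa n j) := by
  have hM : (affineA n) i j = 2 := by
    simp [affineA, h1, h2, h3]
  have h2' := (affineA n).toCoxeterSystem.simple_mul_simple_pow i j
  rw [hM] at h2'
  rw [pow_two] at h2'
  have : aa n i * aa n j = (aa n i * aa n j)⁻¹ := by
    rw [eq_inv_iff_mul_eq_one]; exact h2'
  unfold Commute SemiconjBy
  rw [mul_inv_rev, aa_inv, aa_inv] at this
  calc aa n i * aa n j = aa n j * aa n i := this

-- cast helpers
lemma natCast_ne_zeroZM (n : ℕ) (c : ℕ) (h0 : 0 < c) (h1 : c < n+1) :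
    (c : ZMod (n+1)) ≠ 0 := by
  intro h
  have : ((c : ZMod (n+1))).val = c := ZMod.val_natCast_of_lt h1
  rw [h] at this
  simp [ZMod.val_zero] at this
  omega

lemma natCast_ne_oneZM (n : ℕ) (c : ℕ) (h0 : 2 ≤ c) (h1 : c < n+1) :
    (c : ZMod (n+1)) ≠ 1 := by
  intro h
  have hv : ((c : ZMod (n+1))).val = c := ZMod.val_natCast_of_lt h1
  rw [h] at hv
  have hf : Fact (1 < n+1) := ⟨by omega⟩
  have : (1 : ZMod (n+1)).val = 1 := ZMod.val_one (n+1)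
  omega

lemma comm_nat (n : ℕ) (a : ZMod (n+1)) (c : ℕ) (h2 : 2 ≤ c) (hc : c ≤ n - 1) :
    Commute (aa n a) (aa n (a + (c : ℕ))) := by
  have hn2 : 2 ≤ n := by omega
  have hclt : c < n + 1 := by omega
  apply aa_comm
  · intro h
    exact natCast_ne_zeroZM n c (by omega) hclt (by linear_combination -h)
  · intro h
    refine natCast_ne_zeroZM n (c+1) (by omega) (by omega) ?_
    push_cast
    linear_combination -h
  · intro h
    exact natCast_ne_oneZM n c h2 hclt (by linear_combination h)

-- words
def incw (n : ℕ) (a : ZMod (n+1)) (l : ℕ) : (affineA n).Group :=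
  ((List.range l).map fun k => aa n (a + (k : ℕ))).prod

def decw (n : ℕ) (a : ZMod (n+1)) (l : ℕ) : (affineA n).Group :=
  ((List.range l).map fun k => aa n (a - (k : ℕ))).prod

@[simp] lemma incw_zero (n : ℕ) (a : ZMod (n+1)) : incw n a 0 = 1 := rfl
@[simp] lemma decw_zero (n : ℕ) (a : ZMod (n+1)) : decw n a 0 = 1 := rfl

lemma incw_succ (n : ℕ) (a : ZMod (n+1)) (l : ℕ) :
    incw n a (l+1) = incw n a l * aa n (a + (l : ℕ)) := by
  unfold incw
  rw [List.range_succ, List.map_append, List.prod_append]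
  simp

lemma decw_succ (n : ℕ) (a : ZMod (n+1)) (l : ℕ) :
    decw n a (l+1) = decw n a l * aa n (a - (l : ℕ)) := by
  unfold decw
  rw [List.range_succ, List.map_append, List.prod_append]
  simp

lemma incw_succ' (n : ℕ) (a : ZMod (n+1)) (l : ℕ) :
    incw n a (l+1) = aa n a * incw n (a+1) l := by
  induction l with
  | zero => rw [incw_succ]; simp
  | succ l ih =>
      rw [incw_succ, ih, incw_succ, mul_assoc]
      congr 2
      push_cast
      ring

lemma decw_succ' (n : ℕ) (a : ZMod (n+1)) (l : ℕ) :
    decw n a (l+1) = aa n a * decw n (a-1) l := by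
  induction l with
  | zero => rw [decw_succ]; simp
  | succ l ih =>
      rw [decw_succ, ih, decw_succ, mul_assoc]
      congr 2
      push_cast
      ring

lemma incw_inv (n : ℕ) (a : ZMod (n+1)) (l : ℕ) :
    (incw n a l)⁻¹ = decw n (a + (l:ℕ) - 1) l := by
  induction l with
  | zero => simp
  | succ l ih =>
      rw [incw_succ, mul_inv_rev, aa_inv, ih, ← decw_succ']
      congr 1
      push_cast
      ring

lemma incw_append (n : ℕ) (a : ZMod (n+1)) (l₁ l₂ : ℕ) :
    incw n a (l₁ + l₂) = incw n a l₁ * incw n (a + (l₁:ℕ)) l₂ := by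
  induction l₂ with
  | zero => simp
  | succ l₂ ih =>
      rw [show l₁ + (l₂+1) = (l₁ + l₂) + 1 from rfl, incw_succ, ih, incw_succ, mul_assoc]
      congr 2
      push_cast
      ring

lemma comm_incw (n : ℕ) (x a : ZMod (n+1)) (l : ℕ)
    (h : ∀ k : ℕ, k < l → Commute (aa n x) (aa n (a + (k:ℕ)))) :
    Commute (aa n x) (incw n a l) := by
  apply Commute.list_prod_right
  intro g hg
  simp only [List.mem_map, List.mem_range] at hg
  obtain ⟨k, hk, rfl⟩ := hg
  exact h k hk

lemma comm_decw (n : ℕ) (x a : ZMod (n+1)) (l : ℕ)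
    (h : ∀ k : ℕ, k < l → Commute (aa n x) (aa n (a - (k:ℕ)))) :
    Commute (aa n x) (decw n a l) := by
  apply Commute.list_prod_right
  intro g hg
  simp only [List.mem_map, List.mem_range] at hg
  obtain ⟨k, hk, rfl⟩ := hg
  exact h k hk

lemma comm_incw_nat (n : ℕ) (a : ZMod (n+1)) (d l : ℕ) (h2 : 2 ≤ d) (hdl : d + l ≤ n) :
    Commute (aa n a) (incw n (a + (d:ℕ)) l) := by
  apply comm_incw
  intro k hk
  have : (a + (d:ℕ)) + (k:ℕ) = a + ((d+k : ℕ) : ZMod (n+1)) := by push_cast; ring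
  rw [this]
  exact comm_nat n a (d+k) (by omega) (by omega)

lemma comm_decw_nat (n : ℕ) (a : ZMod (n+1)) (e l : ℕ) (h2 : l + 1 ≤ e) (he : e ≤ n - 1) :
    Commute (aa n a) (decw n (a + (e:ℕ)) l) := by
  apply comm_decw
  intro k hk
  have : (a + (e:ℕ)) - (k:ℕ) = a + ((e-k : ℕ) : ZMod (n+1)) := by
    have : ((e - k : ℕ) : ZMod (n+1)) = (e:ℕ) - (k:ℕ) := by
      push_cast [Nat.cast_sub (by omega : k ≤ e)]
      ring
    rw [this]; ring
  rw [this]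
  exact comm_nat n a (e-k) (by omega) (by omega)

lemma flipw (n : ℕ) (hn : 2 ≤ n) :
    ∀ m : ℕ, m ≤ n - 1 → ∀ a : ZMod (n+1),
    incw n a m * aa n (a + (m:ℕ)) * decw n (a + (m:ℕ) - 1) m
      = decw n (a + (m:ℕ)) m * aa n a * incw n (a+1) m := by
  intro m
  induction m with
  | zero => intro _ a; simp
  | succ m ih =>
    intro hm a
    have hm' : m ≤ n - 1 := by omega
    have c1 : a + ((m+1 : ℕ) : ZMod (n+1)) = (a+1) + (m:ℕ) := by push_cast; ring
    have c2 : a + ((m+1 : ℕ) : ZMod (n+1)) - 1 = a + (m:ℕ) := by push_cast; ring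
    have c3 : (a + (m:ℕ)) - (m:ℕ) = a := by ring
    have c4 : (a+1) + (m:ℕ) - 1 = a + (m:ℕ) := by push_cast; ring
    have c5 : a + ((m+1:ℕ) : ZMod (n+1)) - (m:ℕ) = a + 1 := by push_cast; ring
    have hih := ih hm' (a+1)
    rw [c4] at hih
    have hcd : Commute (aa n a) (decw n ((a+1) + (m:ℕ)) m) := by
      rw [← c1]
      have : a + ((m+1 : ℕ) : ZMod (n+1)) = a + (((m+1 : ℕ) : ℕ) : ZMod (n+1)) := by norm_num
      rw [this]
      exact comm_decw_nat n a (m+1) m (by omega) (by omega)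
    have hci : Commute (aa n a) (incw n (a+1+1) m) := by
      have : a+1+1 = a + ((2:ℕ) : ZMod (n+1)) := by push_cast; ring
      rw [this]
      exact comm_incw_nat n a 2 m (by omega) (by omega)
    calc incw n a (m+1) * aa n (a + ((m+1:ℕ) : ZMod (n+1)))
          * decw n (a + ((m+1:ℕ) : ZMod (n+1)) - 1) (m+1)
        = aa n a * incw n (a+1) m * aa n ((a+1) + (m:ℕ))
            * (decw n (a+(m:ℕ)) m * aa n a) := by
          rw [incw_succ', c2, decw_succ, c3, c1]
      _ = aa n a * (incw n (a+1) m * aa n ((a+1)+(m:ℕ)) * decw n (a+(m:ℕ)) m) * aa n a := by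
          group
      _ = aa n a * (decw n ((a+1)+(m:ℕ)) m * aa n (a+1) * incw n (a+1+1) m) * aa n a := by
          rw [hih]
      _ = (aa n a * decw n ((a+1)+(m:ℕ)) m) * aa n (a+1) * (incw n (a+1+1) m * aa n a) := by
          group
      _ = (decw n ((a+1)+(m:ℕ)) m * aa n a) * aa n (a+1) * (aa n a * incw n (a+1+1) m) := by
          rw [hcd.eq, hci.eq]
      _ = decw n ((a+1)+(m:ℕ)) m * (aa n a * aa n (a+1) * aa n a) * incw n (a+1+1) m := by
          group
      _ = decw n ((a+1)+(m:ℕ)) m * (aa n (a+1) * aa n a * aa n (a+1)) * incw n (a+1+1) m := by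
          rw [aa_braid n hn a]
      _ = (decw n ((a+1)+(m:ℕ)) m * aa n (a+1)) * aa n a * (aa n (a+1) * incw n (a+1+1) m) := by
          group
      _ = decw n (a + ((m+1:ℕ) : ZMod (n+1))) (m+1) * aa n a * incw n (a+1) (m+1) := by
          rw [decw_succ, incw_succ', c5, c1]

lemma ppIncw (n : ℕ) (j : ZMod (n+1)) : pp n j = incw n (j+1) n := rfl


lemma incw_cons (n : ℕ) (a : ZMod (n+1)) (l : ℕ) (hl : 1 ≤ l) :
    incw n a l = aa n a * incw n (a+1) (l-1) := by
  obtain ⟨l', rfl⟩ : ∃ l', l = l'+1 := ⟨l-1, by omega⟩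
  simp [incw_succ']

lemma incw_snoc (n : ℕ) (a : ZMod (n+1)) (l : ℕ) (hl : 1 ≤ l) :
    incw n a l = incw n a (l-1) * aa n (a + ((l-1 : ℕ) : ZMod (n+1))) := by
  obtain ⟨l', rfl⟩ : ∃ l', l = l'+1 := ⟨l-1, by omega⟩
  simp [incw_succ]

lemma decw_cons (n : ℕ) (a : ZMod (n+1)) (l : ℕ) (hl : 1 ≤ l) :
    decw n a l = aa n a * decw n (a-1) (l-1) := by
  obtain ⟨l', rfl⟩ : ∃ l', l = l'+1 := ⟨l-1, by omega⟩
  simp [decw_succ']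

lemma decw_snoc (n : ℕ) (a : ZMod (n+1)) (l : ℕ) (hl : 1 ≤ l) :
    decw n a l = decw n a (l-1) * aa n (a - ((l-1 : ℕ) : ZMod (n+1))) := by
  obtain ⟨l', rfl⟩ : ∃ l', l = l'+1 := ⟨l-1, by omega⟩
  simp [decw_succ]

lemma Slem (n : ℕ) (hn : 2 ≤ n) (t : ℕ) (ht : t + 2 ≤ n) (i : ZMod (n+1)) :
    pp n i * aa n (i + 1 + (t:ℕ)) = aa n (i + 1 + (t:ℕ) + 1) * pp n i := by
  set r : ℕ := n - t - 2 with hr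
  have hdec : pp n i = incw n (i+1) t *
      (aa n (i+1+(t:ℕ)) * (aa n (i+1+(t:ℕ)+1) * incw n (i+1+(t:ℕ)+1+1) r)) := by
    rw [ppIncw]
    have hsplit : incw n (i+1) n = incw n (i+1) (t + (r + 1 + 1)) := by
      congr 1
      omega
    rw [hsplit, incw_append, incw_succ', incw_succ']
    done
  have hcS : Commute (aa n (i+1+(t:ℕ))) (incw n (i+1+(t:ℕ)+1+1) r) := by
    have e : i+1+(t:ℕ)+1+1 = (i+1+(t:ℕ)) + ((2:ℕ) : ZMod (n+1)) := by push_cast; ring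
    rw [e]
    exact comm_incw_nat n _ 2 r (by omega) (by omega)
  have hcP : Commute (aa n (i+1+(t:ℕ)+1)) (incw n (i+1) t) := by
    apply (comm_incw n _ _ _ ?_)
    intro k hk
    have e : i + 1 + (t:ℕ) + 1 = (i + 1 + (k:ℕ)) + ((t+1-k : ℕ) : ZMod (n+1)) := by
      push_cast [Nat.cast_sub (by omega : k ≤ t+1)]
      ring
    rw [e]
    exact (comm_nat n (i+1+(k:ℕ)) (t+1-k) (by omega) (by omega)).symm
  calc pp n i * aa n (i + 1 + (t:ℕ))
      = incw n (i+1) t * (aa n (i+1+(t:ℕ)) * aa n (i+1+(t:ℕ)+1) *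
          (incw n (i+1+(t:ℕ)+1+1) r * aa n (i+1+(t:ℕ)))) := by rw [hdec]; group
    _ = incw n (i+1) t * (aa n (i+1+(t:ℕ)) * aa n (i+1+(t:ℕ)+1) *
          (aa n (i+1+(t:ℕ)) * incw n (i+1+(t:ℕ)+1+1) r)) := by rw [← hcS.eq]
    _ = incw n (i+1) t * (aa n (i+1+(t:ℕ)) * aa n (i+1+(t:ℕ)+1) * aa n (i+1+(t:ℕ))) *
          incw n (i+1+(t:ℕ)+1+1) r := by group
    _ = incw n (i+1) t * (aa n (i+1+(t:ℕ)+1) * aa n (i+1+(t:ℕ)) * aa n (i+1+(t:ℕ)+1)) *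
          incw n (i+1+(t:ℕ)+1+1) r := by rw [aa_braid n hn (i+1+(t:ℕ))]
    _ = incw n (i+1) t * aa n (i+1+(t:ℕ)+1) *
          (aa n (i+1+(t:ℕ)) * (aa n (i+1+(t:ℕ)+1) * incw n (i+1+(t:ℕ)+1+1) r)) := by group
    _ = aa n (i+1+(t:ℕ)+1) * incw n (i+1) t *
          (aa n (i+1+(t:ℕ)) * (aa n (i+1+(t:ℕ)+1) * incw n (i+1+(t:ℕ)+1+1) r)) := by
        rw [hcP.eq]
    _ = aa n (i + 1 + (t:ℕ) + 1) * pp n i := by rw [hdec]; group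

lemma castn_eq_negone (n : ℕ) : ((n:ℕ) : ZMod (n+1)) = -1 := by
  have h := ZMod.natCast_self (n+1)
  push_cast at h
  linear_combination h

lemma pp_shift (n : ℕ) (j : ZMod (n+1)) :
    pp n j = aa n (j+1) * pp n (j+1) * aa n j := by
  have h1 : incw n (j+1) (n+1) = incw n (j+1) n * aa n (j+1 + (n:ℕ)) := incw_succ n (j+1) n
  have h2 : incw n (j+1) (n+1) = aa n (j+1) * incw n (j+1+1) n := incw_succ' n (j+1) n
  have hc : j + 1 + (n:ℕ) = j := by
    rw [castn_eq_negone]; ring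
  rw [hc] at h1
  have key : pp n j * aa n j = aa n (j+1) * pp n (j+1) := h1.symm.trans h2
  calc pp n j = pp n j * aa n j * aa n j := by rw [mul_assoc, aa_sq, mul_one]
    _ = aa n (j+1) * pp n (j+1) * aa n j := by rw [key]

lemma pp_inv (n : ℕ) (hn : 2 ≤ n) (j : ZMod (n+1)) :
    (pp n j)⁻¹ = decw n (j - 1) n := by
  rw [ppIncw, incw_inv]
  congr 1
  rw [castn_eq_negone]
  ring

lemma castn1_eq_negtwo (n : ℕ) (hn : 2 ≤ n) : ((n-1 : ℕ) : ZMod (n+1)) = -2 := by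
  have h : ((n-1 : ℕ) : ZMod (n+1)) = ((n:ℕ) : ZMod (n+1)) - 1 := by
    push_cast [Nat.cast_sub (by omega : 1 ≤ n)]
    ring
  rw [h, castn_eq_negone]
  ring

lemma Rlem (n : ℕ) (hn : 2 ≤ n) (m : ZMod (n+1)) :
    (pp n (m+1))⁻¹ * aa n (m+1) * pp n (m+1)
      = pp n (m-1) * aa n (m-1) * (pp n (m-1))⁻¹ := by
  have hinv : (pp n (m+1))⁻¹ = decw n m n := by
    rw [pp_inv n hn]; congr 1; ring
  have hppm1 : pp n (m-1) = incw n m n := by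
    rw [ppIncw]; congr 1; ring
  have hinv2 : (pp n (m-1))⁻¹ = decw n (m-2) n := by
    rw [pp_inv n hn]; congr 1; ring
  have e1 : decw n m n = aa n m * decw n (m-1) (n-1) := decw_cons n m n (by omega)
  have e2 : pp n (m+1) = incw n (m+1+1) (n-1) * aa n m := by
    rw [ppIncw, incw_snoc n (m+1+1) n (by omega)]
    congr 2
    rw [castn1_eq_negtwo n hn]
    ring
  have hflip := flipw n hn (n-1) (le_refl _) (m+1)
  have ec : m + 1 + ((n-1 : ℕ) : ZMod (n+1)) = m - 1 := by
    rw [castn1_eq_negtwo n hn]; ring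
  rw [ec, show m - 1 - 1 = m - 2 from by ring] at hflip
  -- hflip : incw (m+1) (n-1) * aa (m-1) * decw (m-2) (n-1)
  --        = decw (m-1) (n-1) * aa (m+1) * incw (m+1+1) (n-1)
  have e3 : incw n m n = aa n m * incw n (m+1) (n-1) := incw_cons n m n (by omega)
  have e4 : decw n (m-2) n = decw n (m-2) (n-1) * aa n m := by
    rw [decw_snoc n (m-2) n (by omega)]
    congr 2
    rw [castn1_eq_negtwo n hn]
    ring
  calc (pp n (m+1))⁻¹ * aa n (m+1) * pp n (m+1)
      = aa n m * (decw n (m-1) (n-1) * aa n (m+1) * incw n (m+1+1) (n-1)) * aa n m := by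
        rw [hinv, e1, e2]; group
    _ = aa n m * (incw n (m+1) (n-1) * aa n (m-1) * decw n (m-2) (n-1)) * aa n m := by
        rw [← hflip]
    _ = (aa n m * incw n (m+1) (n-1)) * aa n (m-1) * (decw n (m-2) (n-1) * aa n m) := by
        group
    _ = pp n (m-1) * aa n (m-1) * (pp n (m-1))⁻¹ := by
        rw [hinv2, hppm1, e3, e4]

lemma Dlem (n : ℕ) (hn : 2 ≤ n) (m : ZMod (n+1)) :
    pp n m * pp n m = pp n (m+1) * pp n (m-1) := by
  have h1 : pp n m = aa n (m+1) * pp n (m+1) * aa n m := pp_shift n m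
  have h2 : pp n (m-1) * aa n (m-1) = aa n m * pp n m := by
    have h := pp_shift n (m-1)
    rw [show m - 1 + 1 = m from by ring] at h
    rw [h, mul_assoc, mul_assoc, aa_sq, mul_one]
  have hR := Rlem n hn m
  calc pp n m * pp n m
      = aa n (m+1) * pp n (m+1) * (aa n m * pp n m) := by rw [h1]; group
    _ = aa n (m+1) * pp n (m+1) * (pp n (m-1) * aa n (m-1)) := by rw [h2]
    _ = pp n (m+1) * ((pp n (m+1))⁻¹ * aa n (m+1) * pp n (m+1)) * pp n (m-1) *
          aa n (m-1) := by group
    _ = pp n (m+1) * (pp n (m-1) * aa n (m-1) * (pp n (m-1))⁻¹) * pp n (m-1) *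
          aa n (m-1) := by rw [hR]
    _ = pp n (m+1) * pp n (m-1) * (aa n (m-1) * aa n (m-1)) := by group
    _ = pp n (m+1) * pp n (m-1) := by rw [aa_sq, mul_one]

lemma Qlem (n : ℕ) (hn : 2 ≤ n) :
    ∀ d t : ℕ, t + d = n - 1 → ∀ i : ZMod (n+1),
      pp n i * pp n (i + (t:ℕ)) = pp n (i + (t:ℕ) + 1) * pp n (i - 1) := by
  intro d
  induction d with
  | zero =>
    intro t ht i
    have htn : t = n - 1 := by omega
    subst htn
    have e1 : i + ((n-1 : ℕ) : ZMod (n+1)) = i - 2 := by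
      rw [castn1_eq_negtwo n hn]; ring
    rw [e1, show i - 2 + 1 = i - 1 from by ring]
    have hD := Dlem n hn (i-1)
    rw [show i - 1 + 1 = i from by ring, show i - 1 - 1 = i - 2 from by ring] at hD
    exact hD.symm
  | succ d ih =>
    intro t ht i
    have hQ := ih (t+1) (by omega) i
    have hs1 := Slem n hn t (by omega) i
    have hs2 := Slem n hn t (by omega) (i-1)
    set j : ZMod (n+1) := i + (t:ℕ) with hj
    have e1 : i + 1 + (t:ℕ) = j + 1 := by rw [hj]; ring
    have e2 : i + 1 + (t:ℕ) + 1 = j + 1 + 1 := by rw [e1]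
    have e3 : i - 1 + 1 + (t:ℕ) = j := by rw [hj]; ring
    have e4 : i - 1 + 1 + (t:ℕ) + 1 = j + 1 := by rw [e3]
    have e5 : i + ((t+1 : ℕ) : ZMod (n+1)) = j + 1 := by rw [hj]; push_cast; ring
    rw [e1] at hs1
    rw [e3] at hs2
    rw [e5] at hQ
    -- hs1 : pp i * aa (j+1) = aa (j+1+1) * pp i
    -- hs2 : pp (i-1) * aa j = aa (j+1) * pp (i-1)
    -- hQ : pp i * pp (j+1) = pp (j+1+1) * pp (i-1)
    have hsh : pp n j = aa n (j+1) * pp n (j+1) * aa n j := pp_shift n j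
    have hsh2 : aa n (j+1+1) * pp n (j+1+1) = pp n (j+1) * aa n (j+1) := by
      have h := pp_shift n (j+1)
      rw [h, mul_assoc, mul_assoc, aa_sq, mul_one]
    calc pp n i * pp n j
        = (pp n i * aa n (j+1)) * pp n (j+1) * aa n j := by rw [hsh]; group
      _ = aa n (j+1+1) * (pp n i * pp n (j+1)) * aa n j := by rw [hs1]; group
      _ = aa n (j+1+1) * (pp n (j+1+1) * pp n (i-1)) * aa n j := by rw [hQ]
      _ = (aa n (j+1+1) * pp n (j+1+1)) * pp n (i-1) * aa n j := by group
      _ = (pp n (j+1) * aa n (j+1)) * pp n (i-1) * aa n j := by rw [hsh2]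
      _ = pp n (j+1) * ((aa n (j+1) * pp n (i-1)) * aa n j) := by group
      _ = pp n (j+1) * ((pp n (i-1) * aa n j) * aa n j) := by rw [hs2]
      _ = pp n (j+1) * pp n (i-1) * (aa n j * aa n j) := by group
      _ = pp n (j+1) * pp n (i-1) := by rw [aa_sq, mul_one]


/-- In `Ãₙ`, the cyclic products satisfy `pᵢpⱼ = p_{j+1}p_{i−1}` (indices mod `n+1`). -/
theorem stmt6 (n : ℕ) (hn : 2 ≤ n) (i j : ZMod (n + 1)) :
    pp n i * pp n j = pp n (j + 1) * pp n (i - 1) := by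
  have hval : (((j - i).val : ℕ) : ZMod (n+1)) = j - i := ZMod.natCast_rightInverse (j - i)
  have htlt : (j - i).val < n + 1 := ZMod.val_lt (j - i)
  by_cases hc : (j - i).val = n
  · have hji : j = i - 1 := by
      have h1 : j - i = ((n : ℕ) : ZMod (n+1)) := by rw [← hval, hc]
      rw [castn_eq_negone] at h1
      linear_combination h1
    rw [hji, show i - 1 + 1 = i from by ring]
  · have hQ := Qlem n hn ((n-1) - (j - i).val) (j - i).val (by omega) i
    have e : i + (((j - i).val : ℕ) : ZMod (n+1)) = j := by rw [hval]; ring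
    rw [e] at hQ
    exact hQ
end

section
/- In Ãₙ, the subgroup N generated by the set P = {pⱼ⁻¹pᵢ : 1 ≤ i, j ≤ n+1} is abelian: any two elements pⱼ₁⁻¹pᵢ₁ and pⱼ₂⁻¹pᵢ₂ commute. -/
open CoxeterMatrix

namespace Stmt8Aux

variable {n : ℕ}

/-- cast injectivity -/
lemma cast_eq_iff {a b : ℕ} (ha : a < n + 1) (hb : b < n + 1) :
    ((a : ZMod (n+1)) = (b : ZMod (n+1))) ↔ a = b := by
  rw [ZMod.natCast_eq_natCast_iff]
  unfold Nat.ModEq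
  rw [Nat.mod_eq_of_lt ha, Nat.mod_eq_of_lt hb]

lemma cast_ne_zero {a : ℕ} (h0 : 0 < a) (ha : a < n + 1) : (a : ZMod (n+1)) ≠ 0 := by
  intro h
  have : a = 0 := (cast_eq_iff ha (Nat.succ_pos n)).mp (by simpa using h)
  omega

lemma n_cast : ((n : ℕ) : ZMod (n+1)) = -1 := by
  have : ((n+1 : ℕ) : ZMod (n+1)) = 0 := ZMod.natCast_self _
  push_cast at this ⊢
  linear_combination this

local notation "cs" => CoxeterMatrix.toCoxeterSystem (affineA n)

lemma aa_eq_simple (i : ZMod (n+1)) : aa n i = CoxeterSystem.simple cs i := by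
  rw [toCoxeterSystem_simple]; rfl

lemma aa_mul_self (i : ZMod (n+1)) : aa n i * aa n i = 1 := by
  rw [aa_eq_simple]; exact CoxeterSystem.simple_mul_simple_self _ i

lemma aa_inv (i : ZMod (n+1)) : (aa n i)⁻¹ = aa n i := by
  rw [aa_eq_simple]; exact CoxeterSystem.inv_simple _ i

lemma M_apply (x y : ZMod (n+1)) :
    (affineA n).M x y = if x = y then 1 else if x = y + 1 ∨ y = x + 1 then 3 else 2 := rfl

lemma aa_comm (x y : ZMod (n+1)) (h1 : x ≠ y) (h2 : x ≠ y + 1) (h3 : y ≠ x + 1) :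
    Commute (aa n x) (aa n y) := by
  have hM : (affineA n).M x y = 2 := by
    rw [M_apply, if_neg h1, if_neg (by tauto)]
  have := CoxeterSystem.simple_mul_simple_pow cs x y
  rw [hM] at this
  rw [aa_eq_simple, aa_eq_simple]
  unfold Commute SemiconjBy
  set a := CoxeterSystem.simple cs x
  set b := CoxeterSystem.simple cs y
  have ha : a * a = 1 := CoxeterSystem.simple_mul_simple_self _ x
  have hb : b * b = 1 := CoxeterSystem.simple_mul_simple_self _ y
  have h2' : a * b * (a * b) = 1 := by rw [← this]; ring_nf; rw [sq]
  calc a * b = a * b * (a * b) * (b * a) := by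
        rw [mul_assoc (a*b) (a*b), mul_assoc a b (b*a), ← mul_assoc b b, hb, one_mul, ha, mul_one]
    _ = b * a := by rw [h2', one_mul]

lemma one_ne_zero' (hn : 2 ≤ n) : (1 : ZMod (n+1)) ≠ 0 := by
  have := @cast_ne_zero n 1 (by norm_num) (by omega)
  simpa using this

lemma aa_braid (hn : 2 ≤ n) (x : ZMod (n+1)) :
    aa n x * aa n (x+1) * aa n x = aa n (x+1) * aa n x * aa n (x+1) := by
  have hne : x ≠ x + 1 := by
    intro h
    exact one_ne_zero' hn (by linear_combination -h)
  have hM : (affineA n).M x (x+1) = 3 := by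
    rw [M_apply, if_neg hne, if_pos (Or.inr rfl)]
  have h3 := CoxeterSystem.simple_mul_simple_pow cs x (x+1)
  rw [hM] at h3
  rw [aa_eq_simple, aa_eq_simple]
  set a := CoxeterSystem.simple cs x
  set b := CoxeterSystem.simple cs (x+1)
  have ha : a * a = 1 := CoxeterSystem.simple_mul_simple_self _ x
  have hb : b * b = 1 := CoxeterSystem.simple_mul_simple_self _ (x+1)
  have h3' : (a * b * a) * (b * a * b) = 1 := by
    rw [← h3, pow_succ, pow_succ, pow_one]
    group
  have hsq : (b * a * b) * (b * a * b) = 1 := by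
    calc (b*a*b)*(b*a*b) = b * a * (b*b) * a * b := by group
      _ = b * (a * a) * b := by rw [hb]; group
      _ = b * b := by rw [ha]; group
      _ = 1 := hb
  calc a * b * a = (a * b * a) * ((b * a * b) * (b * a * b)) := by rw [hsq, mul_one]
    _ = (a * b * a * (b * a * b)) * (b * a * b) := by group
    _ = b * a * b := by rw [h3', one_mul]

/-- product of `c` consecutive generators starting at `j` -/
def W (j : ZMod (n+1)) (c : ℕ) : (affineA n).Group :=
  ((List.range c).map fun k => aa n (j + (k : ℕ))).prod

lemma pp_eq_W (j : ZMod (n+1)) : pp n j = W (j + 1) n := by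
  unfold pp W
  congr 1

lemma W_zero (j : ZMod (n+1)) : W j 0 = 1 := rfl

lemma W_succ (j : ZMod (n+1)) (c : ℕ) : W j (c+1) = W j c * aa n (j + c) := by
  unfold W
  rw [List.range_succ, List.map_append, List.prod_append]
  simp

lemma W_one (j : ZMod (n+1)) : W j 1 = aa n j := by
  show (List.map (fun k => aa n (j + (k:ℕ))) (List.range 1)).prod = aa n j
  rw [List.range_succ]
  simp

lemma W_add (j : ZMod (n+1)) (a b : ℕ) : W j (a + b) = W j a * W (j + (a : ZMod (n+1))) b := by
  unfold W
  rw [List.range_add, List.map_append, List.prod_append]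
  congr 1
  rw [List.map_map]
  congr 1
  apply List.map_congr_left
  intro k _
  simp only [Function.comp_apply]
  congr 1
  push_cast
  ring

lemma aa_comm_shift (hn : 2 ≤ n) (x : ZMod (n+1)) (c : ℕ) (h1 : 2 ≤ c) (h2 : c ≤ n - 1) :
    Commute (aa n x) (aa n (x + (c:ℕ))) := by
  apply aa_comm
  · intro h
    have hc : ((c:ℕ) : ZMod (n+1)) = 0 := by linear_combination -h
    exact cast_ne_zero (by omega) (by omega) hc
  · intro h
    have hc : ((c+1:ℕ) : ZMod (n+1)) = 0 := by push_cast; linear_combination -h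
    exact cast_ne_zero (by omega) (by omega) hc
  · intro h
    have hc : ((c:ℕ) : ZMod (n+1)) = ((1:ℕ) : ZMod (n+1)) := by push_cast; linear_combination h
    have := (cast_eq_iff (by omega) (by omega)).mp hc
    omega

lemma comm_W_right (x j : ZMod (n+1)) (c : ℕ)
    (h : ∀ k : ℕ, k < c → Commute (aa n x) (aa n (j + (k:ℕ)))) :
    Commute (aa n x) (W j c) := by
  apply Commute.list_prod_right
  intro y hy
  simp only [List.mem_map, List.mem_range] at hy
  obtain ⟨k, hk, rfl⟩ := hy
  exact h k hk

lemma W_congr {j j' : ZMod (n+1)} (c : ℕ) (h : j = j') : W j c = W j' c := by rw [h]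

lemma aa_congr {j j' : ZMod (n+1)} (h : j = j') : aa n j = aa n j' := by rw [h]

lemma S_word (hn : 2 ≤ n) (i : ZMod (n+1)) (t : ℕ) (ht : t + 2 ≤ n) :
    pp n i * aa n (i + 1 + ((t:ℕ) : ZMod (n+1))) = aa n (i + 2 + ((t:ℕ) : ZMod (n+1))) * pp n i := by
  rw [aa_congr (show i + 2 + ((t:ℕ) : ZMod (n+1)) = i + 1 + ((t:ℕ) : ZMod (n+1)) + 1 by ring)]
  set b := n - t - 2 with hbdef
  set x := aa n (i + 1 + ((t:ℕ) : ZMod (n+1))) with hx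
  set y := aa n (i + 1 + ((t:ℕ) : ZMod (n+1)) + 1) with hy
  set A := W (i+1) t with hA'
  set B := W (i + 3 + ((t:ℕ) : ZMod (n+1))) b with hB'
  have c2 : W (i + 1 + ((t:ℕ) : ZMod (n+1))) 2 = x * y := by
    rw [show (2:ℕ) = 1+1 from rfl, W_succ, W_one, hx, hy]
    rw [aa_congr (show i + 1 + ((t:ℕ) : ZMod (n+1)) + ((1:ℕ) : ZMod (n+1)) = i + 1 + ((t:ℕ) : ZMod (n+1)) + 1 by push_cast; ring)]
  have e : pp n i = A * (x * y) * B := by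
    have hn' : n = t + (2 + b) := by omega
    have h1 : W (i+1) n = A * W (i + 1 + ((t:ℕ) : ZMod (n+1))) (2+b) := by
      rw [hA']
      have := W_add (n := n) (i+1) t (2+b)
      rw [← hn'] at this
      rw [this, W_congr (2+b) (show (i+1) + (((t:ℕ) : ZMod (n+1)) : ZMod (n+1)) = i + 1 + ((t:ℕ) : ZMod (n+1)) by ring)]
    have h2 : W (i + 1 + ((t:ℕ) : ZMod (n+1))) (2+b) = (x * y) * B := by
      rw [W_add, c2, hB',
        W_congr b (show i + 1 + ((t:ℕ) : ZMod (n+1)) + ((2:ℕ) : ZMod (n+1)) = i + 3 + ((t:ℕ) : ZMod (n+1)) by push_cast; ring)]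
    rw [pp_eq_W, h1, h2]
    simp only [mul_assoc]
  have hA : Commute y A := by
    apply comm_W_right
    intro k hk
    have hc := aa_comm_shift hn (i + 1 + ((k:ℕ) : ZMod (n+1))) (t+1-k) (by omega) (by omega)
    rw [aa_congr (show (i + 1 + ((k:ℕ) : ZMod (n+1))) + ((t+1-k : ℕ) : ZMod (n+1)) = i + 1 + ((t:ℕ) : ZMod (n+1)) + 1 by
      push_cast [Nat.cast_sub (show k ≤ t + 1 by omega)]; ring)] at hc
    exact hc.symm
  have hB : Commute x B := by
    apply comm_W_right
    intro k hk
    have hc := aa_comm_shift hn (i + 1 + ((t:ℕ) : ZMod (n+1))) (2+k) (by omega) (by omega)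
    rw [aa_congr (show (i + 1 + ((t:ℕ) : ZMod (n+1))) + ((2+k : ℕ) : ZMod (n+1)) = i + 3 + ((t:ℕ) : ZMod (n+1)) + ((k:ℕ) : ZMod (n+1)) by
      push_cast; ring)] at hc
    exact hc
  have hbr : x * y * x = y * x * y := aa_braid hn _
  calc pp n i * x = A * (x * y) * B * x := by rw [e]
    _ = A * (x * y) * (x * B) := by rw [mul_assoc, ← hB.eq]
    _ = A * (x * y * x) * B := by simp only [mul_assoc]
    _ = A * (y * x * y) * B := by rw [hbr]
    _ = (A * y) * ((x * y) * B) := by simp only [mul_assoc]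
    _ = y * (A * (x * y) * B) := by rw [← hA.eq]; simp only [mul_assoc]
    _ = y * pp n i := by rw [← e]

lemma pp_congr {j j' : ZMod (n+1)} (h : j = j') : pp n j = pp n j' := by rw [h]

lemma aa_cancel (i : ZMod (n+1)) (z : (affineA n).Group) : aa n i * (aa n i * z) = z := by
  rw [← mul_assoc, aa_mul_self, one_mul]

lemma Sgen (hn : 2 ≤ n) (i k : ZMod (n+1)) (h1 : k ≠ i) (h2 : k ≠ i - 1) :
    pp n i * aa n k = aa n (k + 1) * pp n i := by
  set t := (k - i - 1).val with htd
  have htc : ((t : ℕ) : ZMod (n+1)) = k - i - 1 := by rw [ZMod.natCast_val, ZMod.cast_id]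
  have htn : t ≤ n := by have := ZMod.val_lt (k - i - 1); omega
  have ht1 : t ≠ n := by
    intro h
    rw [h, n_cast] at htc
    exact h1 (by linear_combination -htc)
  have ht2 : t ≠ n - 1 := by
    intro h
    rw [h] at htc
    rw [Nat.cast_sub (by omega), n_cast, Nat.cast_one] at htc
    exact h2 (by linear_combination -htc)
  have hS := S_word hn i t (by omega)
  rw [aa_congr (show i + 1 + ((t:ℕ) : ZMod (n+1)) = k by rw [htc]; ring),
      aa_congr (show i + 2 + ((t:ℕ) : ZMod (n+1)) = k + 1 by rw [htc]; ring)] at hS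
  exact hS

lemma T_word (hn : 2 ≤ n) (i : ZMod (n+1)) (c : ℕ) (hc : c ≤ n - 1) :
    pp n i * W (i+1) c = W (i+2) c * pp n i := by
  induction c with
  | zero => rw [W_zero, W_zero, mul_one, one_mul]
  | succ d ih =>
    have hS := S_word hn i d (by omega)
    calc pp n i * W (i+1) (d+1) = (pp n i * W (i+1) d) * aa n (i + 1 + ((d:ℕ) : ZMod (n+1))) := by
          rw [W_succ]; simp only [mul_assoc]
      _ = W (i+2) d * (pp n i * aa n (i + 1 + ((d:ℕ) : ZMod (n+1)))) := by
          rw [ih (by omega)]; simp only [mul_assoc]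
      _ = W (i+2) d * (aa n (i + 2 + ((d:ℕ) : ZMod (n+1))) * pp n i) := by rw [hS]
      _ = W (i+2) (d+1) * pp n i := by rw [W_succ]; simp only [mul_assoc]

lemma W1 (hn : 2 ≤ n) (i : ZMod (n+1)) : pp n i = aa n (i+1) * W (i+2) (n-1) := by
  have h := W_add (n := n) (i+1) 1 (n-1)
  rw [W_one] at h
  rw [show 1 + (n-1) = n by omega] at h
  rw [pp_eq_W, h,
    W_congr (n-1) (show (i+1) + ((1:ℕ) : ZMod (n+1)) = i + 2 by push_cast; ring)]

lemma W2 (hn : 2 ≤ n) (i : ZMod (n+1)) : pp n i = W (i+1) (n-1) * aa n (i-1) := by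
  have h := W_succ (n := n) (i+1) (n-1)
  rw [show n - 1 + 1 = n by omega] at h
  rw [pp_eq_W, h,
    aa_congr (show (i+1) + (((n-1):ℕ) : ZMod (n+1)) = i - 1 by
      rw [Nat.cast_sub (by omega), n_cast, Nat.cast_one]; ring)]

lemma W3 (hn : 2 ≤ n) (j : ZMod (n+1)) : pp n j = aa n (j+1) * pp n (j+1) * aa n j := by
  have h2 := W2 hn (j+1)
  rw [W_congr (n := n) (n-1) (show j + 1 + 1 = j + 2 by ring),
    aa_congr (show j + 1 - 1 = j by ring)] at h2
  rw [W1 hn j, h2]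
  simp only [mul_assoc]
  rw [aa_mul_self, mul_one]

lemma W3' (hn : 2 ≤ n) (j : ZMod (n+1)) : pp n (j+1) = aa n (j+1) * pp n j * aa n j := by
  rw [W3 hn j]
  simp only [mul_assoc]
  rw [aa_cancel]
  rw [aa_mul_self, mul_one]

lemma key_diag (hn : 2 ≤ n) (i : ZMod (n+1)) :
    pp n i * pp n i * aa n (i-1) = aa n (i+1) * (pp n i * pp n i) := by
  have hT := T_word hn i (n-1) (le_refl _)
  calc pp n i * pp n i * aa n (i-1)
      = pp n i * (W (i+1) (n-1) * (aa n (i-1) * aa n (i-1))) := by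
        rw [W2 hn i]; simp only [mul_assoc]
    _ = pp n i * W (i+1) (n-1) := by rw [aa_mul_self, mul_one]
    _ = W (i+2) (n-1) * pp n i := hT
    _ = aa n (i+1) * (aa n (i+1) * (W (i+2) (n-1) * pp n i)) := by rw [aa_cancel]
    _ = aa n (i+1) * ((aa n (i+1) * W (i+2) (n-1)) * pp n i) := by simp only [mul_assoc]
    _ = aa n (i+1) * (pp n i * pp n i) := by rw [← W1 hn i]

lemma diag (hn : 2 ≤ n) (i : ZMod (n+1)) :
    pp n i * pp n i = pp n (i+1) * pp n (i-1) := by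
  have h1 : pp n (i+1) = aa n (i+1) * pp n i * aa n i := W3' hn i
  have h2 : pp n (i-1) = aa n i * pp n i * aa n (i-1) := by
    have h := W3 hn (i-1)
    rw [aa_congr (show i - 1 + 1 = i by ring), pp_congr (show i - 1 + 1 = i by ring)] at h
    exact h
  rw [h1, h2]
  symm
  calc aa n (i+1) * pp n i * aa n i * (aa n i * pp n i * aa n (i-1))
      = aa n (i+1) * (pp n i * (aa n i * (aa n i * (pp n i * aa n (i-1))))) := by
        simp only [mul_assoc]
    _ = aa n (i+1) * (pp n i * (pp n i * aa n (i-1))) := by rw [aa_cancel]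
    _ = aa n (i+1) * (pp n i * pp n i * aa n (i-1)) := by simp only [mul_assoc]
    _ = aa n (i+1) * (aa n (i+1) * (pp n i * pp n i)) := by rw [key_diag hn i]
    _ = pp n i * pp n i := by rw [aa_cancel]

lemma step (hn : 2 ≤ n) (i j : ZMod (n+1)) (h1 : j ≠ i - 1) (h2 : j ≠ i - 2)
    (hR : pp n i * pp n j = pp n (j+1) * pp n (i-1)) :
    pp n i * pp n (j+1) = pp n (j+2) * pp n (i-1) := by
  have hS1 : pp n i * aa n (j+1) = aa n (j+2) * pp n i := by
    have h := Sgen hn i (j+1) (fun h => h1 (by linear_combination h))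
      (fun h => h2 (by linear_combination h))
    rw [aa_congr (show j+1+1 = j+2 by ring)] at h
    exact h
  have hS2 : pp n (i-1) * aa n j = aa n (j+1) * pp n (i-1) :=
    Sgen hn (i-1) j h1 (fun h => h2 (by linear_combination h))
  have hW0 : aa n (j+1) * pp n (j+1) = pp n j * aa n j := by
    rw [W3 hn j]
    simp only [mul_assoc]
    rw [aa_mul_self, mul_one]
  have hW : pp n (j+1) * aa n (j+1) = aa n (j+2) * pp n (j+2) := by
    have h := W3' hn (j+1)
    rw [pp_congr (show j+1+1 = j+2 by ring), aa_congr (show j+1+1 = j+2 by ring)] at h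
    rw [h]
    simp only [mul_assoc]
    rw [aa_cancel]
  have main : aa n (j+2) * (pp n i * pp n (j+1)) = aa n (j+2) * (pp n (j+2) * pp n (i-1)) := by
    calc aa n (j+2) * (pp n i * pp n (j+1))
        = (aa n (j+2) * pp n i) * pp n (j+1) := by simp only [mul_assoc]
      _ = (pp n i * aa n (j+1)) * pp n (j+1) := by rw [← hS1]
      _ = pp n i * (aa n (j+1) * pp n (j+1)) := by simp only [mul_assoc]
      _ = pp n i * (pp n j * aa n j) := by rw [hW0]
      _ = (pp n i * pp n j) * aa n j := by simp only [mul_assoc]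
      _ = (pp n (j+1) * pp n (i-1)) * aa n j := by rw [hR]
      _ = pp n (j+1) * (pp n (i-1) * aa n j) := by simp only [mul_assoc]
      _ = pp n (j+1) * (aa n (j+1) * pp n (i-1)) := by rw [hS2]
      _ = (pp n (j+1) * aa n (j+1)) * pp n (i-1) := by simp only [mul_assoc]
      _ = (aa n (j+2) * pp n (j+2)) * pp n (i-1) := by rw [hW]
      _ = aa n (j+2) * (pp n (j+2) * pp n (i-1)) := by simp only [mul_assoc]
  exact mul_left_cancel main

lemma Rel_aux (hn : 2 ≤ n) : ∀ d : ℕ, d ≤ n → ∀ i : ZMod (n+1),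
    pp n i * pp n (i - 1 + ((d:ℕ) : ZMod (n+1))) = pp n (i + ((d:ℕ) : ZMod (n+1))) * pp n (i-1) := by
  intro d
  induction d with
  | zero =>
    intro _ i
    rw [pp_congr (show i - 1 + ((0:ℕ) : ZMod (n+1)) = i - 1 by push_cast; ring),
        pp_congr (show i + ((0:ℕ) : ZMod (n+1)) = i by push_cast; ring)]
  | succ e ih =>
    intro hd i
    rcases Nat.eq_zero_or_pos e with he | he
    · subst he
      rw [pp_congr (show i - 1 + (((0+1:ℕ)) : ZMod (n+1)) = i by push_cast; ring),
          pp_congr (show i + (((0+1:ℕ)) : ZMod (n+1)) = i + 1 by push_cast; ring)]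
      exact diag hn i
    · have hR := ih (by omega) i
      have hb1 : (i - 1 + ((e:ℕ) : ZMod (n+1))) + 1 = i + ((e:ℕ) : ZMod (n+1)) := by ring
      rw [← pp_congr hb1] at hR
      have hstep := step hn i (i - 1 + ((e:ℕ) : ZMod (n+1)))
        (fun h => cast_ne_zero he (by omega) (show ((e:ℕ) : ZMod (n+1)) = 0 by linear_combination h))
        (fun h => cast_ne_zero (show 0 < e + 1 by omega) (by omega)
          (show (((e+1:ℕ)) : ZMod (n+1)) = 0 by push_cast; linear_combination h))
        hR
      rw [pp_congr (show (i - 1 + ((e:ℕ) : ZMod (n+1))) + 1 = i - 1 + (((e+1:ℕ)) : ZMod (n+1)) by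
            push_cast; ring),
          pp_congr (show (i - 1 + ((e:ℕ) : ZMod (n+1))) + 2 = i + (((e+1:ℕ)) : ZMod (n+1)) by
            push_cast; ring)] at hstep
      exact hstep

lemma Rel (hn : 2 ≤ n) (i j : ZMod (n+1)) :
    pp n i * pp n j = pp n (j+1) * pp n (i-1) := by
  have h := Rel_aux hn (j - (i-1)).val (by have := ZMod.val_lt (n := n+1) (j - (i-1)); omega) i
  rw [pp_congr (show i - 1 + (((j - (i-1)).val : ℕ) : ZMod (n+1)) = j by
        rw [ZMod.natCast_val, ZMod.cast_id]; ring),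
      pp_congr (show i + (((j - (i-1)).val : ℕ) : ZMod (n+1)) = j + 1 by
        rw [ZMod.natCast_val, ZMod.cast_id]; ring)] at h
  exact h

lemma Rswap (hn : 2 ≤ n) (a b : ZMod (n+1)) :
    pp n a * (pp n b)⁻¹ = (pp n (b+1))⁻¹ * pp n (a+1) := by
  have h := Rel hn (a+1) b
  rw [pp_congr (show a + 1 - 1 = a by ring)] at h
  rw [← mul_right_inj (pp n (b+1)), mul_inv_cancel_left, ← mul_left_inj (pp n b)]
  simp only [mul_assoc]
  rw [inv_mul_cancel, mul_one]
  exact h.symm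

lemma Rinv (hn : 2 ≤ n) (i j : ZMod (n+1)) :
    (pp n j)⁻¹ * (pp n i)⁻¹ = (pp n (i-1))⁻¹ * (pp n (j+1))⁻¹ := by
  have h := congrArg Inv.inv (Rel hn i j)
  rw [mul_inv_rev, mul_inv_rev] at h
  exact h

lemma mergeL (hn : 2 ≤ n) (a b c d : ZMod (n+1)) :
    ((pp n a)⁻¹ * pp n b) * ((pp n c)⁻¹ * pp n d)
      = (pp n a)⁻¹ * (pp n (c+1))⁻¹ * (pp n (b+1) * pp n d) := by
  have h := Rswap hn b c
  calc ((pp n a)⁻¹ * pp n b) * ((pp n c)⁻¹ * pp n d)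
      = (pp n a)⁻¹ * ((pp n b * (pp n c)⁻¹) * pp n d) := by simp only [mul_assoc]
    _ = (pp n a)⁻¹ * (((pp n (c+1))⁻¹ * pp n (b+1)) * pp n d) := by rw [h]
    _ = (pp n a)⁻¹ * (pp n (c+1))⁻¹ * (pp n (b+1) * pp n d) := by simp only [mul_assoc]

lemma mergeR (hn : 2 ≤ n) (a b c d : ZMod (n+1)) :
    (pp n a)⁻¹ * (pp n (c+1))⁻¹ * (pp n (b+1) * pp n d)
      = (pp n c)⁻¹ * (pp n (a+1))⁻¹ * (pp n (d+1) * pp n b) := by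
  have h1 := Rinv hn (c+1) a
  rw [pp_congr (show c + 1 - 1 = c by ring)] at h1
  have h2 := Rel hn (b+1) d
  rw [pp_congr (show b + 1 - 1 = b by ring)] at h2
  rw [h1, h2]

lemma comm_pairs (hn : 2 ≤ n) (i₁ j₁ i₂ j₂ : ZMod (n+1)) :
    Commute ((pp n j₁)⁻¹ * pp n i₁) ((pp n j₂)⁻¹ * pp n i₂) := by
  show ((pp n j₁)⁻¹ * pp n i₁) * ((pp n j₂)⁻¹ * pp n i₂)
      = ((pp n j₂)⁻¹ * pp n i₂) * ((pp n j₁)⁻¹ * pp n i₁)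
  rw [mergeL hn j₁ i₁ j₂ i₂, mergeR hn j₁ i₁ j₂ i₂, ← mergeL hn j₂ i₂ j₁ i₁]

end Stmt8Aux

/-- In `Ãₙ`, the subgroup `N` generated by `P = {pⱼ⁻¹pᵢ}` is abelian: any two elements
`pⱼ₁⁻¹pᵢ₁` and `pⱼ₂⁻¹pᵢ₂` commute. -/
theorem stmt8 (n : ℕ) (hn : 2 ≤ n) :
    (∀ i₁ j₁ i₂ j₂ : ZMod (n + 1),
      Commute ((pp n j₁)⁻¹ * pp n i₁) ((pp n j₂)⁻¹ * pp n i₂)) ∧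
    (∀ x ∈ NN n, ∀ y ∈ NN n, x * y = y * x) := by
  constructor
  · exact fun i₁ j₁ i₂ j₂ => Stmt8Aux.comm_pairs hn i₁ j₁ i₂ j₂
  · intro x hx y hy
    refine Subgroup.closure_induction₂ (p := fun a b _ _ => a * b = b * a)
      ?_ ?_ ?_ ?_ ?_ ?_ ?_ hx hy
    · rintro a b ⟨i₁, j₁, rfl⟩ ⟨i₂, j₂, rfl⟩
      exact Stmt8Aux.comm_pairs hn i₁ j₁ i₂ j₂
    · intro a _
      rw [one_mul, mul_one]
    · intro a _
      rw [one_mul, mul_one]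
    · intro a b c _ _ _ h1 h2
      rw [mul_assoc, h2, ← mul_assoc, h1, mul_assoc]
    · intro b c a _ _ _ h1 h2
      rw [← mul_assoc, h1, mul_assoc, h2, ← mul_assoc]
    · intro a b _ _ h
      exact (Commute.inv_left h).eq
    · intro a b _ _ h
      exact (Commute.inv_right h).eq
end

section
/- In Ãₙ, let Δ = a_p a_{p+1} ⋯ a_k be a consecutive product of generators with p < k ≤ n. Then: Δgⱼ = g_{j+1}Δ if p ≤ j < k; Δg_k = g_p⁻¹g_{p+1}⁻¹⋯g_k⁻¹Δ; gⱼΔ = Δg_{j−1} if p < j ≤ k; g_pΔ = Δg_p⁻¹⋯g_k⁻¹; and gⱼΔ = Δgⱼ if j < p−1 or j > k+1. -/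
open CoxeterMatrix

namespace AProof

variable {n : ℕ}

lemma aa_mul_self (i : ZMod (n+1)) : aa n i * aa n i = 1 :=
  (affineA n).toCoxeterSystem.simple_mul_simple_self i

lemma cs_simple : (affineA n).toCoxeterSystem.simple = aa n :=
  CoxeterMatrix.toCoxeterSystem_simple _

lemma aa_inv (i : ZMod (n+1)) : (aa n i)⁻¹ = aa n i := by
  have := ((affineA n).toCoxeterSystem.inv_simple i).symm
  rw [cs_simple] at this
  exact this.symm

lemma zmod_cast_eq_iff (a b : ℕ) : ((a : ZMod (n+1)) = b) ↔ a % (n+1) = b % (n+1) :=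
  ZMod.natCast_eq_natCast_iff' a b (n+1)

lemma one_ne_zero' (hn : 2 ≤ n) : (1 : ZMod (n+1)) ≠ 0 := by
  obtain ⟨m, rfl⟩ : ∃ m, n = m + 2 := ⟨n - 2, by omega⟩
  haveI : Fact (1 < m + 2 + 1) := ⟨by omega⟩
  exact one_ne_zero

lemma aa_braid (hn : 2 ≤ n) {i j : ZMod (n+1)} (h : j = i + 1) :
    aa n i * aa n j * aa n i = aa n j * aa n i * aa n j := by
  have hne : i ≠ j := by
    rw [h]; intro hh
    exact one_ne_zero' hn (by linear_combination -hh)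
  have h3 : (affineA n).M i j = 3 := by
    show (if i = j then 1 else if i = j + 1 ∨ j = i + 1 then 3 else 2) = 3
    rw [if_neg hne, if_pos (Or.inr h)]
  have e := (affineA n).toCoxeterSystem.simple_mul_simple_pow i j
  rw [cs_simple, h3] at e
  rw [pow_succ, pow_succ, pow_one] at e
  have e2 : (aa n i * aa n j * aa n i) * (aa n j * aa n i * aa n j) = 1 := by
    calc (aa n i * aa n j * aa n i) * (aa n j * aa n i * aa n j)
        = aa n i * aa n j * (aa n i * aa n j) * (aa n i * aa n j) := by
          simp [mul_assoc]
      _ = 1 := e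
  have := eq_inv_of_mul_eq_one_left e2
  rw [this]
  simp [mul_inv_rev, aa_inv, mul_assoc]

lemma aa_comm {i j : ZMod (n+1)} (h1 : i ≠ j) (h2 : i ≠ j + 1) (h3 : j ≠ i + 1) :
    aa n i * aa n j = aa n j * aa n i := by
  have h2' : (affineA n).M i j = 2 := by
    show (if i = j then 1 else if i = j + 1 ∨ j = i + 1 then 3 else 2) = 2
    rw [if_neg h1, if_neg (by rintro (hh | hh); exacts [h2 hh, h3 hh])]
  have e := (affineA n).toCoxeterSystem.simple_mul_simple_pow i j
  rw [cs_simple, h2', pow_two] at e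
  have := eq_inv_of_mul_eq_one_left e
  rw [this]
  simp [mul_inv_rev, aa_inv]


lemma aa_congr {x y : ZMod (n+1)} (h : x = y) : aa n x = aa n y := by rw [h]

lemma aaj_comm (j : ZMod (n+1)) (a b : ℕ)
    (h1 : a % (n+1) ≠ b % (n+1)) (h2 : a % (n+1) ≠ (b+1) % (n+1))
    (h3 : b % (n+1) ≠ (a+1) % (n+1)) :
    aa n (j + (a:ℕ)) * aa n (j + (b:ℕ)) = aa n (j + (b:ℕ)) * aa n (j + (a:ℕ)) := by
  apply aa_comm
  · intro hh
    exact h1 ((zmod_cast_eq_iff _ _).1 (add_left_cancel hh))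
  · intro hh
    apply h2
    have hb : j + (a:ℕ) = j + ((b+1:ℕ)) := by rw [hh]; push_cast; ring
    exact (zmod_cast_eq_iff _ _).1 (add_left_cancel hb)
  · intro hh
    apply h3
    have hb : j + (b:ℕ) = j + ((a+1:ℕ)) := by rw [hh]; push_cast; ring
    exact (zmod_cast_eq_iff _ _).1 (add_left_cancel hb)

lemma aaj_braid (hn : 2 ≤ n) (j : ZMod (n+1)) (a b : ℕ)
    (h : b % (n+1) = (a+1) % (n+1)) :
    aa n (j + (a:ℕ)) * aa n (j + (b:ℕ)) * aa n (j + (a:ℕ))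
      = aa n (j + (b:ℕ)) * aa n (j + (a:ℕ)) * aa n (j + (b:ℕ)) := by
  apply aa_braid hn
  have hb : ((b:ℕ) : ZMod (n+1)) = ((a+1:ℕ)) := (zmod_cast_eq_iff _ _).2 h
  rw [hb]; push_cast; ring

lemma commute_prod {H : Type*} [Monoid H] (g : H) (l : List H)
    (h : ∀ x ∈ l, g * x = x * g) : g * l.prod = l.prod * g := by
  induction l with
  | nil => simp
  | cons a t ih =>
    simp only [List.prod_cons]
    rw [← mul_assoc, h a List.mem_cons_self, mul_assoc,
      ih (fun x hx => h x (List.mem_cons_of_mem a hx)), ← mul_assoc]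

/-- block of consecutive letters starting at `j`, length `len` -/
def blk (j : ZMod (n+1)) (len : ℕ) : (affineA n).Group :=
  ((List.range len).map fun t => aa n (j + (t:ℕ))).prod

lemma blk_congr {x y : ZMod (n+1)} (h : x = y) (len : ℕ) : blk x len = blk y len := by rw [h]

@[simp] lemma blk_zero (j : ZMod (n+1)) : blk j 0 = 1 := by simp [blk]

lemma blk_succ_last (j : ZMod (n+1)) (l : ℕ) :
    blk j (l+1) = blk j l * aa n (j + (l:ℕ)) := by
  unfold blk
  rw [List.range_succ, List.map_append, List.prod_append]
  simp

@[simp] lemma blk_one (j : ZMod (n+1)) : blk j 1 = aa n j := by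
  rw [blk_succ_last]; simp

lemma blk_append (j : ZMod (n+1)) (x y : ℕ) :
    blk j (x + y) = blk j x * blk (j + (x : ZMod (n+1))) y := by
  unfold blk
  rw [List.range_add, List.map_append, List.prod_append, List.map_map]
  congr 1
  have : ∀ t ∈ List.range y,
      ((fun t : ℕ => aa n (j + (t:ℕ))) ∘ (fun t : ℕ => x + t)) t
        = (fun t : ℕ => aa n (j + (x : ZMod (n+1)) + (t:ℕ))) t := by
    intro t _
    simp only [Function.comp_apply]
    apply aa_congr
    push_cast; ring
  rw [List.map_congr_left this]

lemma blk_succ_head (j : ZMod (n+1)) (l : ℕ) :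
    blk j (l+1) = aa n j * blk (j + 1) l := by
  have h := blk_append j 1 l
  rw [show 1 + l = l + 1 from by omega, blk_one] at h
  rw [h]
  norm_cast

lemma comm_blk (g : (affineA n).Group) (j : ZMod (n+1)) (len : ℕ)
    (h : ∀ t, t < len → g * aa n (j + (t:ℕ)) = aa n (j + (t:ℕ)) * g) :
    g * blk j len = blk j len * g := by
  apply commute_prod
  intro x hx
  simp only [List.mem_map, List.mem_range] at hx
  obtain ⟨t, ht, rfl⟩ := hx
  exact h t ht

lemma pp_eq (j : ZMod (n+1)) : pp n j = blk (j + 1) n := rfl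

lemma cast_np1 : ((n:ℕ) : ZMod (n+1)) + 1 = 0 := by
  have := ZMod.natCast_self (n+1)
  push_cast at this
  linear_combination this

lemma pp_succ (hn : 1 ≤ n) (j : ZMod (n+1)) :
    pp n (j + 1) = aa n (j + 1) * pp n j * aa n j := by
  obtain ⟨m, rfl⟩ : ∃ m, n = m + 1 := ⟨n - 1, by omega⟩
  rw [pp_eq, pp_eq]
  rw [blk_succ_head (j+1) m, blk_succ_last (j+1+1) m]
  rw [← mul_assoc, aa_mul_self, one_mul]
  congr 1
  apply aa_congr
  have h0 : ((m:ℕ) : ZMod (m+1+1)) + 1 + 1 = 0 := by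
    have := @cast_np1 (m+1)
    push_cast at this ⊢
    linear_combination this
  linear_combination h0

lemma mod_ne (a b : ℕ) (ha : a ≤ n+1) (hb : b ≤ n+1)
    (h1 : a ≠ b) (h2 : ¬(a = n+1 ∧ b = 0)) (h3 : ¬(b = n+1 ∧ a = 0)) :
    a % (n+1) ≠ b % (n+1) := by
  have ha' : a % (n+1) = if a = n+1 then 0 else a := by
    rcases eq_or_lt_of_le ha with h | h
    · simp [h]
    · rw [Nat.mod_eq_of_lt h, if_neg (by omega)]
  have hb' : b % (n+1) = if b = n+1 then 0 else b := by
    rcases eq_or_lt_of_le hb with h | h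
    · simp [h]
    · rw [Nat.mod_eq_of_lt h, if_neg (by omega)]
  rw [ha', hb']
  split_ifs <;> omega

lemma swap_assoc {x y : (affineA n).Group} (h : x * y = y * x) (z : (affineA n).Group) :
    x * (y * z) = y * (x * z) := by rw [← mul_assoc, h, mul_assoc]

lemma blk_decomp (b : ZMod (n+1)) (x r : ℕ) :
    blk b (x + (1 + (1 + r)))
      = blk b x * (aa n (b + (x : ZMod (n+1)))
        * (aa n (b + (x : ZMod (n+1)) + 1) * blk (b + (x : ZMod (n+1)) + 1 + 1) r)) := by
  rw [blk_append b x (1 + (1+r)), blk_append _ 1 (1+r), blk_append _ 1 r, blk_one, blk_one]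
  norm_cast

lemma move (hn : 2 ≤ n) (j : ZMod (n+1)) (q : ℕ) (hq : q + 2 ≤ n) :
    aa n (j + ((q+2:ℕ) : ZMod (n+1))) * pp n j
      = pp n j * aa n (j + ((q+1:ℕ) : ZMod (n+1))) := by
  set r := n - q - 2 with hr
  have hlen : n = q + (1 + (1 + r)) := by omega
  have hpp : pp n j = blk (j+1) q * (aa n (j + ((q+1:ℕ) : ZMod (n+1)))
      * (aa n (j + ((q+2:ℕ) : ZMod (n+1))) * blk (j + ((q+3:ℕ) : ZMod (n+1))) r)) := by
    rw [pp_eq, congrArg (blk (j+1)) hlen, blk_decomp,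
      aa_congr (show (j+1) + (q : ZMod (n+1)) = j + ((q+1:ℕ) : ZMod (n+1)) by push_cast; ring),
      aa_congr (show (j+1) + (q : ZMod (n+1)) + 1 = j + ((q+2:ℕ) : ZMod (n+1)) by push_cast; ring),
      blk_congr (show (j+1) + (q : ZMod (n+1)) + 1 + 1 = j + ((q+3:ℕ) : ZMod (n+1)) by push_cast; ring)]
  have hX : aa n (j + ((q+2:ℕ) : ZMod (n+1))) * blk (j+1) q
      = blk (j+1) q * aa n (j + ((q+2:ℕ) : ZMod (n+1))) := by
    apply comm_blk
    intro t ht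
    rw [aa_congr (show (j+1) + (t : ZMod (n+1)) = j + ((t+1:ℕ) : ZMod (n+1)) by push_cast; ring)]
    apply aaj_comm <;> (apply mod_ne <;> omega)
  have hZT : aa n (j + ((q+1:ℕ) : ZMod (n+1))) * blk (j + ((q+3:ℕ) : ZMod (n+1))) r
      = blk (j + ((q+3:ℕ) : ZMod (n+1))) r * aa n (j + ((q+1:ℕ) : ZMod (n+1))) := by
    apply comm_blk
    intro t ht
    rw [aa_congr (show (j + ((q+3:ℕ) : ZMod (n+1))) + (t : ZMod (n+1))
      = j + ((q+3+t:ℕ) : ZMod (n+1)) by push_cast; ring)]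
    apply aaj_comm <;> (apply mod_ne <;> omega)
  have hB : aa n (j + ((q+2:ℕ) : ZMod (n+1))) * aa n (j + ((q+1:ℕ) : ZMod (n+1)))
        * aa n (j + ((q+2:ℕ) : ZMod (n+1)))
      = aa n (j + ((q+1:ℕ) : ZMod (n+1))) * aa n (j + ((q+2:ℕ) : ZMod (n+1)))
        * aa n (j + ((q+1:ℕ) : ZMod (n+1))) :=
    (aaj_braid hn j (q+1) (q+2) rfl).symm
  rw [hpp]
  simp only [mul_assoc]
  rw [swap_assoc hX]
  congr 1
  rw [← mul_assoc, ← mul_assoc, hB, mul_assoc, mul_assoc, hZT]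

lemma move_inv (hn : 2 ≤ n) (j : ZMod (n+1)) (q : ℕ) (hq : q + 2 ≤ n) :
    (pp n j)⁻¹ * aa n (j + ((q+2:ℕ) : ZMod (n+1)))
      = aa n (j + ((q+1:ℕ) : ZMod (n+1))) * (pp n j)⁻¹ := by
  have h := move hn j q hq
  calc (pp n j)⁻¹ * aa n (j + ((q+2:ℕ) : ZMod (n+1)))
      = (pp n j)⁻¹ * (aa n (j + ((q+2:ℕ) : ZMod (n+1))) * pp n j) * (pp n j)⁻¹ := by group
    _ = (pp n j)⁻¹ * (pp n j * aa n (j + ((q+1:ℕ) : ZMod (n+1)))) * (pp n j)⁻¹ := by rw [h]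
    _ = aa n (j + ((q+1:ℕ) : ZMod (n+1))) * (pp n j)⁻¹ := by group

lemma move_inv2 (hn : 2 ≤ n) (j : ZMod (n+1)) (q : ℕ) (hq : q + 2 ≤ n) :
    aa n (j + ((q+1:ℕ) : ZMod (n+1))) * (pp n j)⁻¹
      = (pp n j)⁻¹ * aa n (j + ((q+2:ℕ) : ZMod (n+1))) :=
  (move_inv hn j q hq).symm

lemma gg_mul (j : ZMod (n+1)) : gg n j * gg n (j+1) = (pp n j)⁻¹ * pp n (j+1+1) := by
  unfold gg; group

lemma aG2 (hn : 2 ≤ n) (j : ZMod (n+1)) :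
    aa n j * gg n j = (gg n j)⁻¹ * aa n j := by
  have h1 : (1:ℕ) ≤ n := by omega
  simp only [gg, pp_succ h1 j, mul_inv_rev, aa_inv, inv_inv, mul_assoc]

lemma aG2' (hn : 2 ≤ n) (j : ZMod (n+1)) :
    gg n j * aa n j = aa n j * (gg n j)⁻¹ := by
  have h := aG2 hn j
  calc gg n j * aa n j = gg n j * (aa n j * gg n j) * (gg n j)⁻¹ := by group
    _ = gg n j * ((gg n j)⁻¹ * aa n j) * (gg n j)⁻¹ := by rw [h]
    _ = aa n j * (gg n j)⁻¹ := by group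

lemma aG3 (hn : 2 ≤ n) (j : ZMod (n+1)) :
    aa n (j+1) * gg n j = gg n j * gg n (j+1) * aa n (j+1) := by
  have h1 : (1:ℕ) ≤ n := by omega
  have m1 : aa n (j+1) * (pp n j)⁻¹ = (pp n j)⁻¹ * aa n (j+1+1) := by
    have := move_inv2 hn j 0 (by omega)
    rwa [aa_congr (show j + ((0+1:ℕ) : ZMod (n+1)) = j + 1 by push_cast; ring),
      aa_congr (show j + ((0+2:ℕ) : ZMod (n+1)) = j + 1 + 1 by push_cast; ring)] at this
  rw [gg_mul, show gg n j = (pp n j)⁻¹ * pp n (j+1) from rfl, ← mul_assoc, m1]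
  rw [pp_succ h1 (j+1), mul_assoc, mul_assoc, mul_assoc, aa_mul_self, mul_one]

lemma aG1 (hn : 2 ≤ n) (j : ZMod (n+1)) :
    aa n j * gg n (j+1) = gg n j * gg n (j+1) * aa n j := by
  have h1 : (1:ℕ) ≤ n := by omega
  have hpp : (pp n (j+1))⁻¹ = aa n j * (pp n j)⁻¹ * aa n (j+1) := by
    rw [pp_succ h1 j]
    simp only [mul_inv_rev, aa_inv, mul_assoc]
  have m1 : aa n (j+1) * pp n (j+1+1) = pp n (j+1+1) * aa n j := by
    have := move hn (j+1+1) (n-2) (by omega)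
    rwa [aa_congr (show (j+1+1) + ((n-2+2:ℕ) : ZMod (n+1)) = j + 1 by
        rw [show n-2+2 = n from by omega]
        have := @cast_np1 n
        linear_combination this),
      aa_congr (show (j+1+1) + ((n-2+1:ℕ) : ZMod (n+1)) = j by
        rw [show n-2+1 = n-1 from by omega]
        have h2 : ((n-1:ℕ) : ZMod (n+1)) + 1 + 1 = 0 := by
          have := @cast_np1 n
          have hn' : ((n:ℕ) : ZMod (n+1)) = ((n-1:ℕ) : ZMod (n+1)) + 1 := by
            rw [show n = (n-1)+1 from by omega]; push_cast; ring
          rw [hn'] at this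
          linear_combination this
        linear_combination h2)] at this
  rw [gg_mul, show gg n (j+1) = (pp n (j+1))⁻¹ * pp n (j+1+1) from rfl]
  rw [hpp]
  calc aa n j * (aa n j * (pp n j)⁻¹ * aa n (j+1) * pp n (j+1+1))
      = (pp n j)⁻¹ * (aa n (j+1) * pp n (j+1+1)) := by
        simp only [← mul_assoc, aa_mul_self, one_mul]
    _ = (pp n j)⁻¹ * (pp n (j+1+1) * aa n j) := by rw [m1]
    _ = (pp n j)⁻¹ * pp n (j+1+1) * aa n j := by rw [mul_assoc]

lemma aG4 (hn : 2 ≤ n) (j : ZMod (n+1)) (t : ℕ) (ht : t + 3 ≤ n) :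
    aa n (j + ((t+2:ℕ) : ZMod (n+1))) * gg n j
      = gg n j * aa n (j + ((t+2:ℕ) : ZMod (n+1))) := by
  have m1 : aa n (j + ((t+2:ℕ) : ZMod (n+1))) * (pp n j)⁻¹
      = (pp n j)⁻¹ * aa n (j + ((t+3:ℕ) : ZMod (n+1))) := by
    have := move_inv2 hn j (t+1) (by omega)
    rwa [aa_congr (show j + ((t+1+1:ℕ) : ZMod (n+1)) = j + ((t+2:ℕ) : ZMod (n+1)) by push_cast; ring),
      aa_congr (show j + ((t+1+2:ℕ) : ZMod (n+1)) = j + ((t+3:ℕ) : ZMod (n+1)) by push_cast; ring)] at this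
  have m2 : aa n (j + ((t+3:ℕ) : ZMod (n+1))) * pp n (j+1)
      = pp n (j+1) * aa n (j + ((t+2:ℕ) : ZMod (n+1))) := by
    have := move hn (j+1) t (by omega)
    rwa [aa_congr (show (j+1) + ((t+2:ℕ) : ZMod (n+1)) = j + ((t+3:ℕ) : ZMod (n+1)) by push_cast; ring),
      aa_congr (show (j+1) + ((t+1:ℕ) : ZMod (n+1)) = j + ((t+2:ℕ) : ZMod (n+1)) by push_cast; ring)] at this
  show aa n (j + ((t+2:ℕ) : ZMod (n+1))) * ((pp n j)⁻¹ * pp n (j+1)) = _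
  rw [← mul_assoc, m1, mul_assoc, m2, ← mul_assoc]
  rfl

lemma cancel_assoc {x z : (affineA n).Group} (h : x * x = 1) : x * (x * z) = z := by
  rw [← mul_assoc, h, one_mul]

lemma braid_assoc {x y : (affineA n).Group} (h : x*y*x = y*x*y) (z : (affineA n).Group) :
    x*(y*(x*z)) = y*(x*(y*z)) := by
  have := congrArg (fun w => w * z) h
  simpa [mul_assoc] using this

lemma braid5 {x y : (affineA n).Group} (hB : x*y*x = y*x*y) (hx : x*x = 1) (hy : y*y = 1)
    (z : (affineA n).Group) : x*(y*(x*(y*(x*z)))) = y*z := by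
  rw [braid_assoc hB, cancel_assoc hy, cancel_assoc hx]

/-- palindromic chain with innermost letter `b` and outer layers `b+1, …, b+l`. -/
def pal (b : ZMod (n+1)) : ℕ → (affineA n).Group
  | 0 => aa n b
  | (l+1) => aa n (b + ((l+1:ℕ) : ZMod (n+1))) * pal b l * aa n (b + ((l+1:ℕ) : ZMod (n+1)))

lemma comm_pal (g : (affineA n).Group) (b : ZMod (n+1)) (l : ℕ)
    (h : ∀ u, u ≤ l → g * aa n (b + (u : ZMod (n+1))) = aa n (b + (u : ZMod (n+1))) * g) :
    g * pal b l = pal b l * g := by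
  induction l with
  | zero =>
    have h0 := h 0 (le_refl 0)
    rw [aa_congr (show b + ((0:ℕ) : ZMod (n+1)) = b by push_cast; ring)] at h0
    exact h0
  | succ m ih =>
    have he := h (m+1) (by omega)
    have hin := ih (fun u hu => h u (by omega))
    show g * (aa n (b + ((m+1:ℕ) : ZMod (n+1))) * pal b m * aa n (b + ((m+1:ℕ) : ZMod (n+1))))
      = aa n (b + ((m+1:ℕ) : ZMod (n+1))) * pal b m * aa n (b + ((m+1:ℕ) : ZMod (n+1))) * g
    simp only [mul_assoc]
    rw [swap_assoc he, swap_assoc hin, he]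

lemma chain (hn : 2 ≤ n) (b : ZMod (n+1)) : ∀ l, l + 2 ≤ n →
    pal b l * aa n (b + ((l+1:ℕ) : ZMod (n+1))) * pal b l
      = aa n (b + ((l+1:ℕ) : ZMod (n+1))) * pal b l * aa n (b + ((l+1:ℕ) : ZMod (n+1))) := by
  intro l
  induction l with
  | zero =>
    intro _
    have := aaj_braid hn b 0 1 rfl
    rwa [aa_congr (show b + ((0:ℕ) : ZMod (n+1)) = b by push_cast; ring)] at this
    -- goal uses pal b 0 = aa n b : definitional
  | succ m ih =>
    intro hl
    have hIH := ih (by omega)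
    set x := pal b m with hx
    set e := aa n (b + ((m+1:ℕ) : ZMod (n+1))) with he
    set t := aa n (b + ((m+1+1:ℕ) : ZMod (n+1))) with htdef
    have hb : e * t * e = t * e * t := aaj_braid hn b (m+1) (m+1+1) rfl
    have ht2 : t * t = 1 := aa_mul_self _
    have he2 : e * e = 1 := aa_mul_self _
    have hc : t * x = x * t := by
      apply comm_pal
      intro u hu
      apply aaj_comm
      · apply mod_ne <;> omega
      · apply mod_ne <;> omega
      · apply mod_ne <;> omega
    show (e * x * e) * t * (e * x * e) = t * (e * x * e) * t
    simp only [mul_assoc]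
    -- LHS: e*(x*(e*(t*(e*(x*e)))))  RHS: t*(e*(x*(e*t)))
    rw [braid_assoc hb (x * e)]
    rw [← swap_assoc hc (e * (t * (x * e)))]
    rw [swap_assoc hc e]
    rw [braid_assoc hIH (t * e)]
    rw [braid_assoc hb (x * (e * (t * e)))]
    rw [swap_assoc hc (e * (t * e))]
    rw [braid_assoc hb.symm e]  -- t*(e*(t*e)) = e*(t*(e*e))
    rw [he2, mul_one]

lemma pal_zero (b : ZMod (n+1)) : pal b 0 = aa n b := rfl

lemma pal_succ (b : ZMod (n+1)) (l : ℕ) :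
    pal b (l+1) = aa n (b + ((l+1:ℕ) : ZMod (n+1))) * pal b l * aa n (b + ((l+1:ℕ) : ZMod (n+1))) := rfl

lemma braid_conj {u x y : (affineA n).Group} (h : x*y*x = y*x*y) :
    (u*x*u⁻¹)*(u*y*u⁻¹)*(u*x*u⁻¹) = (u*y*u⁻¹)*(u*x*u⁻¹)*(u*y*u⁻¹) := by
  calc (u*x*u⁻¹)*(u*y*u⁻¹)*(u*x*u⁻¹) = u*(x*y*x)*u⁻¹ := by group
    _ = u*(y*x*y)*u⁻¹ := by rw [h]
    _ = (u*y*u⁻¹)*(u*x*u⁻¹)*(u*y*u⁻¹) := by group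

lemma conj_pal (hn : 2 ≤ n) (j : ZMod (n+1)) : ∀ u, u + 1 ≤ n →
    (blk (j+1) (u+1))⁻¹ * (aa n (j+1) * blk (j+1) (u+1)) = pal (j+1) u := by
  intro u
  induction u with
  | zero =>
    intro _
    rw [blk_one, aa_inv, pal_zero, cancel_assoc (aa_mul_self _)]
  | succ m ih =>
    intro hm
    have ihz := congrArg (fun w => w * aa n ((j+1) + ((m+1:ℕ) : ZMod (n+1)))) (ih (by omega))
    simp only [mul_assoc] at ihz
    rw [blk_succ_last (j+1) (m+1)]
    rw [aa_congr (show (j+1) + ((m+1:ℕ) : ZMod (n+1)) = (j+1) + ((m+1:ℕ) : ZMod (n+1)) from rfl)]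
    rw [mul_inv_rev, aa_inv]
    simp only [mul_assoc]
    rw [ihz, pal_succ]
    simp only [mul_assoc]

lemma Y_pal (hn : 2 ≤ n) (j : ZMod (n+1)) :
    (pp n j)⁻¹ * (aa n (j+1) * pp n j) = pal (j+1) (n-1) := by
  have h := conj_pal hn j (n-1) (by omega)
  rwa [show blk (j+1) (n-1+1) = blk (j+1) n from by congr 1; omega, ← pp_eq] at h

lemma b_pal (hn3 : 3 ≤ n) (j : ZMod (n+1)) : ∀ l, l + 3 ≤ n →
    aa n (j+1) * pal (j+1) (l+1) * aa n (j+1) = pal (j+1+1) l := by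
  have hn : 2 ≤ n := by omega
  intro l
  induction l with
  | zero =>
    intro _
    rw [pal_succ, pal_zero, pal_zero]
    have bc : aa n (j+1) * aa n (j+1+1) * aa n (j+1) = aa n (j+1+1) * aa n (j+1) * aa n (j+1+1) := by
      have := aaj_braid hn j 1 2 rfl
      rwa [aa_congr (show j + ((1:ℕ) : ZMod (n+1)) = j+1 by push_cast; ring),
        aa_congr (show j + ((2:ℕ) : ZMod (n+1)) = j+1+1 by push_cast; ring)] at this
    rw [aa_congr (show (j+1) + ((0+1:ℕ) : ZMod (n+1)) = j+1+1 by push_cast; ring)]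
    have h5 := braid5 bc (aa_mul_self (j+1)) (aa_mul_self (j+1+1)) 1
    simp only [mul_one] at h5
    calc aa n (j+1) * (aa n (j+1+1) * aa n (j+1) * aa n (j+1+1)) * aa n (j+1)
        = aa n (j+1) * (aa n (j+1+1) * (aa n (j+1) * (aa n (j+1+1) * aa n (j+1)))) := by
          simp only [mul_assoc]
      _ = aa n (j+1+1) := h5
  | succ m ih =>
    intro hl
    have hcomm : aa n (j+1) * aa n ((j+1) + ((m+2:ℕ) : ZMod (n+1)))
        = aa n ((j+1) + ((m+2:ℕ) : ZMod (n+1))) * aa n (j+1) := by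
      have := aaj_comm j 1 (m+3) (mod_ne _ _ (by omega) (by omega) (by omega) (by omega) (by omega))
        (mod_ne _ _ (by omega) (by omega) (by omega) (by omega) (by omega))
        (mod_ne _ _ (by omega) (by omega) (by omega) (by omega) (by omega))
      rwa [aa_congr (show j + ((1:ℕ) : ZMod (n+1)) = j+1 by push_cast; ring),
        aa_congr (show j + ((m+3:ℕ) : ZMod (n+1)) = (j+1) + ((m+2:ℕ) : ZMod (n+1)) by push_cast; ring)] at this
    rw [pal_succ (j+1) (m+1), aa_congr (show (j+1) + ((m+1+1:ℕ) : ZMod (n+1)) = (j+1) + ((m+2:ℕ) : ZMod (n+1)) by push_cast; ring)]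
    rw [pal_succ (j+1+1) m, aa_congr (show (j+1+1) + ((m+1:ℕ) : ZMod (n+1)) = (j+1) + ((m+2:ℕ) : ZMod (n+1)) by push_cast; ring)]
    calc aa n (j+1) * (aa n ((j+1) + ((m+2:ℕ) : ZMod (n+1))) * pal (j+1) (m+1) * aa n ((j+1) + ((m+2:ℕ) : ZMod (n+1)))) * aa n (j+1)
        = aa n ((j+1) + ((m+2:ℕ) : ZMod (n+1))) * (aa n (j+1) * pal (j+1) (m+1) * aa n (j+1)) * aa n ((j+1) + ((m+2:ℕ) : ZMod (n+1))) := by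
          simp only [mul_assoc]
          rw [swap_assoc hcomm, ← hcomm]
      _ = aa n ((j+1) + ((m+2:ℕ) : ZMod (n+1))) * pal (j+1+1) m * aa n ((j+1) + ((m+2:ℕ) : ZMod (n+1))) := by
          rw [ih (by omega)]

lemma ggC (hn : 2 ≤ n) (j : ZMod (n+1)) :
    gg n j * gg n (j+1) = gg n (j+1) * gg n j := by
  have hn1 : (1:ℕ) ≤ n := by omega
  rcases eq_or_lt_of_le hn with h2 | h3
  · -- n = 2
    subst h2
    have bAB : aa 2 j * aa 2 (j+1) * aa 2 j = aa 2 (j+1) * aa 2 j * aa 2 (j+1) := by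
      have := aaj_braid (le_refl 2) j 0 1 rfl
      rwa [aa_congr (show j + ((0:ℕ) : ZMod 3) = j by push_cast; ring),
        aa_congr (show j + ((1:ℕ) : ZMod 3) = j+1 by push_cast; ring)] at this
    have bBC : aa 2 (j+1) * aa 2 (j+1+1) * aa 2 (j+1) = aa 2 (j+1+1) * aa 2 (j+1) * aa 2 (j+1+1) := by
      have := aaj_braid (le_refl 2) j 1 2 rfl
      rwa [aa_congr (show j + ((1:ℕ) : ZMod 3) = j+1 by push_cast; ring),
        aa_congr (show j + ((2:ℕ) : ZMod 3) = j+1+1 by push_cast; ring)] at this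
    have bCA : aa 2 (j+1+1) * aa 2 j * aa 2 (j+1+1) = aa 2 j * aa 2 (j+1+1) * aa 2 j := by
      have := aaj_braid (le_refl 2) j 2 3 rfl
      rwa [aa_congr (show j + ((2:ℕ) : ZMod 3) = j+1+1 by push_cast; ring),
        aa_congr (show j + ((3:ℕ) : ZMod 3) = j by
          have h3' : ((3:ℕ) : ZMod 3) = 0 := by decide
          rw [h3', add_zero])] at this
    have hz : (1 : ZMod 3) + 1 + 1 = 0 := by decide
    have hpp0 : pp 2 j = aa 2 (j+1) * aa 2 (j+1+1) := by
      rw [pp_eq, congrArg (blk (j+1)) (show (2:ℕ) = 1+1 by norm_num), blk_succ_last, blk_one,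
        aa_congr (show (j+1) + ((1:ℕ) : ZMod 3) = j+1+1 by push_cast; ring)]
    have hpp1 : pp 2 (j+1) = aa 2 (j+1+1) * aa 2 j := by
      rw [pp_eq, congrArg (blk (j+1+1)) (show (2:ℕ) = 1+1 by norm_num), blk_succ_last, blk_one,
        aa_congr (show (j+1+1) + ((1:ℕ) : ZMod 3) = j by push_cast; linear_combination hz)]
    have hpp2 : pp 2 (j+1+1) = aa 2 j * aa 2 (j+1) := by
      rw [pp_eq, congrArg (blk (j+1+1+1)) (show (2:ℕ) = 1+1 by norm_num), blk_succ_last, blk_one,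
        aa_congr (show ((j+1+1+1 : ZMod 3)) = j from by linear_combination hz),
        aa_congr (show (j+1+1+1) + ((1:ℕ) : ZMod 3) = j+1 by push_cast; linear_combination hz)]
    show ((pp 2 j)⁻¹ * pp 2 (j+1)) * ((pp 2 (j+1))⁻¹ * pp 2 (j+1+1))
      = ((pp 2 (j+1))⁻¹ * pp 2 (j+1+1)) * ((pp 2 j)⁻¹ * pp 2 (j+1))
    rw [hpp0, hpp1, hpp2]
    simp only [mul_inv_rev, aa_inv, mul_assoc]
    rw [cancel_assoc (aa_mul_self j), cancel_assoc (aa_mul_self (j+1+1))]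
    rw [braid_assoc bBC (aa 2 (j+1+1) * aa 2 j), cancel_assoc (aa_mul_self (j+1+1))]
    rw [braid_assoc bCA.symm (aa 2 (j+1+1) * (aa 2 (j+1) * aa 2 j)),
      cancel_assoc (aa_mul_self (j+1+1))]
    rw [show aa 2 (j+1) * (aa 2 j * aa 2 (j+1)) = aa 2 j * (aa 2 (j+1) * aa 2 j) from by
      have := bAB.symm; simpa [mul_assoc] using this]
  · -- 3 ≤ n
    have hn3 : 3 ≤ n := h3
    obtain ⟨Y, hYdef⟩ : ∃ Y, Y = (pp n j)⁻¹ * (aa n (j+1) * pp n j) := ⟨_, rfl⟩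
    have hYsq : Y * Y = 1 := by
      rw [hYdef]
      calc ((pp n j)⁻¹ * (aa n (j+1) * pp n j)) * ((pp n j)⁻¹ * (aa n (j+1) * pp n j))
          = (pp n j)⁻¹ * ((aa n (j+1) * aa n (j+1)) * pp n j) := by group
        _ = 1 := by rw [aa_mul_self]; group
    have moveCB : aa n (j+1+1) * pp n j = pp n j * aa n (j+1) := by
      have := move hn j 0 (by omega)
      rwa [aa_congr (show j + ((0+2:ℕ) : ZMod (n+1)) = j+1+1 by push_cast; ring),
        aa_congr (show j + ((0+1:ℕ) : ZMod (n+1)) = j+1 by push_cast; ring)] at this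
    have eC : aa n (j+1+1) = pp n j * aa n (j+1) * (pp n j)⁻¹ :=
      eq_mul_inv_iff_mul_eq.mpr moveCB
    have eB : aa n (j+1) = (pp n j)⁻¹ * (aa n (j+1+1) * pp n j) := by
      rw [moveCB, inv_mul_cancel_left]
    have ggj : gg n j = Y * aa n j := by
      show (pp n j)⁻¹ * pp n (j+1) = _
      rw [pp_succ hn1 j, hYdef]
      simp only [mul_assoc]
    have ggj1 : gg n (j+1) = aa n j * (Y * (aa n (j+1) * (Y * (aa n j * aa n (j+1))))) := by
      show (pp n (j+1))⁻¹ * pp n (j+1+1) = _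
      rw [pp_succ hn1 (j+1), pp_succ hn1 j, eC, hYdef]
      simp only [mul_inv_rev, aa_inv, inv_inv, mul_assoc]
    have braid_AB : aa n j * aa n (j+1) * aa n j = aa n (j+1) * aa n j * aa n (j+1) := by
      have := aaj_braid hn j 0 1 rfl
      rwa [aa_congr (show j + ((0:ℕ) : ZMod (n+1)) = j by push_cast; ring),
        aa_congr (show j + ((1:ℕ) : ZMod (n+1)) = j+1 by push_cast; ring)] at this
    have bBC : aa n (j+1) * aa n (j+1+1) * aa n (j+1)
        = aa n (j+1+1) * aa n (j+1) * aa n (j+1+1) := by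
      have := aaj_braid hn j 1 2 rfl
      rwa [aa_congr (show j + ((1:ℕ) : ZMod (n+1)) = j+1 by push_cast; ring),
        aa_congr (show j + ((2:ℕ) : ZMod (n+1)) = j+1+1 by push_cast; ring)] at this
    have braid_YB : Y * aa n (j+1) * Y = aa n (j+1) * Y * aa n (j+1) := by
      have l1 : Y * aa n (j+1) * Y
          = (pp n j)⁻¹ * (aa n (j+1) * aa n (j+1+1) * aa n (j+1)) * pp n j := by
        rw [hYdef]
        nth_rewrite 2 [eB]
        group
      have l2 : aa n (j+1) * Y * aa n (j+1)
          = (pp n j)⁻¹ * (aa n (j+1+1) * aa n (j+1) * aa n (j+1+1)) * pp n j := by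
        rw [hYdef]
        nth_rewrite 1 [eB]
        nth_rewrite 2 [eB]
        group
      rw [l1, l2, bBC]
    have braid_fA : aa n (j + ((n:ℕ) : ZMod (n+1))) * aa n j * aa n (j + ((n:ℕ) : ZMod (n+1)))
        = aa n j * aa n (j + ((n:ℕ) : ZMod (n+1))) * aa n j := by
      have := aaj_braid hn j n 0 (by simp [Nat.mod_self])
      rwa [aa_congr (show j + ((0:ℕ) : ZMod (n+1)) = j by push_cast; ring)] at this
    have comm_Bf : aa n (j+1) * aa n (j + ((n:ℕ) : ZMod (n+1)))
        = aa n (j + ((n:ℕ) : ZMod (n+1))) * aa n (j+1) := by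
      have := aaj_comm j 1 n (mod_ne _ _ (by omega) (by omega) (by omega) (by omega) (by omega))
        (mod_ne _ _ (by omega) (by omega) (by omega) (by omega) (by omega))
        (mod_ne _ _ (by omega) (by omega) (by omega) (by omega) (by omega))
      rwa [aa_congr (show j + ((1:ℕ) : ZMod (n+1)) = j+1 by push_cast; ring)] at this
    have hYff : Y = aa n (j + ((n:ℕ) : ZMod (n+1))) * pal (j+1) (n-2)
        * aa n (j + ((n:ℕ) : ZMod (n+1))) := by
      have hY3 := Y_pal hn j
      rw [hYdef, hY3, show n-1 = (n-2)+1 from by omega, pal_succ,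
        aa_congr (show (j+1) + ((n-2+1:ℕ) : ZMod (n+1)) = j + ((n:ℕ) : ZMod (n+1)) by
          rw [show n-2+1 = n-1 from by omega, Nat.cast_sub (show 1 ≤ n by omega)]
          push_cast; ring)]
    have hT : aa n (j+1) * pal (j+1) (n-2) * aa n (j+1) = pal (j+1+1) (n-3) := by
      have hT0 := b_pal hn3 j (n-3) (by omega)
      rwa [show n-3+1 = n-2 from by omega] at hT0
    have hAG0 : aa n j * pal (j+1+1) (n-3) = pal (j+1+1) (n-3) * aa n j := by
      apply comm_pal
      intro u hu
      have := aaj_comm j 0 (u+2)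
        (mod_ne _ _ (by omega) (by omega) (by omega) (by omega) (by omega))
        (mod_ne _ _ (by omega) (by omega) (by omega) (by omega) (by omega))
        (mod_ne _ _ (by omega) (by omega) (by omega) (by omega) (by omega))
      rwa [aa_congr (show j + ((0:ℕ) : ZMod (n+1)) = j by push_cast; ring),
        aa_congr (show j + ((u+2:ℕ) : ZMod (n+1)) = (j+1+1) + (u : ZMod (n+1)) by push_cast; ring)] at this
    have CH : pal (j+1+1) (n-3) * aa n (j + ((n:ℕ) : ZMod (n+1))) * pal (j+1+1) (n-3)
        = aa n (j + ((n:ℕ) : ZMod (n+1))) * pal (j+1+1) (n-3) * aa n (j + ((n:ℕ) : ZMod (n+1))) := by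
      have := chain hn (j+1+1) (n-3) (by omega)
      rwa [aa_congr (show (j+1+1) + ((n-3+1:ℕ) : ZMod (n+1)) = j + ((n:ℕ) : ZMod (n+1)) by
        rw [show n-3+1 = n-2 from by omega, Nat.cast_sub (show 2 ≤ n by omega)]
        push_cast; ring)] at this
    have t1 := braid_conj (u := aa n (j+1) * aa n j) CH
    rw [show (aa n (j+1) * aa n j)⁻¹ = aa n j * aa n (j+1) from by
      rw [mul_inv_rev, aa_inv, aa_inv]] at t1
    have eE1 : aa n (j+1) * aa n j * pal (j+1+1) (n-3) * (aa n j * aa n (j+1))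
        = pal (j+1) (n-2) := by
      have hA : aa n j * pal (j+1+1) (n-3) * aa n j = pal (j+1+1) (n-3) := by
        rw [hAG0, mul_assoc, aa_mul_self, mul_one]
      calc aa n (j+1) * aa n j * pal (j+1+1) (n-3) * (aa n j * aa n (j+1))
          = aa n (j+1) * (aa n j * pal (j+1+1) (n-3) * aa n j) * aa n (j+1) := by group
        _ = aa n (j+1) * pal (j+1+1) (n-3) * aa n (j+1) := by rw [hA]
        _ = pal (j+1) (n-2) := by
            rw [← hT]
            simp only [mul_assoc]
            rw [cancel_assoc (aa_mul_self (j+1)), aa_mul_self, mul_one]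
    have eE2 : aa n (j+1) * aa n j * aa n (j + ((n:ℕ) : ZMod (n+1))) * (aa n j * aa n (j+1))
        = aa n (j + ((n:ℕ) : ZMod (n+1))) * (aa n j * aa n (j+1) * aa n j)
          * aa n (j + ((n:ℕ) : ZMod (n+1))) := by
      calc aa n (j+1) * aa n j * aa n (j + ((n:ℕ) : ZMod (n+1))) * (aa n j * aa n (j+1))
          = aa n (j+1) * (aa n j * aa n (j + ((n:ℕ) : ZMod (n+1))) * aa n j) * aa n (j+1) := by
            group
        _ = aa n (j+1) * (aa n (j + ((n:ℕ) : ZMod (n+1))) * aa n j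
              * aa n (j + ((n:ℕ) : ZMod (n+1)))) * aa n (j+1) := by
            rw [show aa n j * aa n (j + ((n:ℕ) : ZMod (n+1))) * aa n j
              = aa n (j + ((n:ℕ) : ZMod (n+1))) * aa n j * aa n (j + ((n:ℕ) : ZMod (n+1)))
              from braid_fA.symm]
        _ = (aa n (j+1) * aa n (j + ((n:ℕ) : ZMod (n+1)))) * aa n j
              * (aa n (j + ((n:ℕ) : ZMod (n+1))) * aa n (j+1)) := by group
        _ = (aa n (j + ((n:ℕ) : ZMod (n+1))) * aa n (j+1)) * aa n j
              * (aa n (j+1) * aa n (j + ((n:ℕ) : ZMod (n+1)))) := by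
            rw [comm_Bf]
        _ = aa n (j + ((n:ℕ) : ZMod (n+1))) * (aa n (j+1) * aa n j * aa n (j+1))
              * aa n (j + ((n:ℕ) : ZMod (n+1))) := by group
        _ = aa n (j + ((n:ℕ) : ZMod (n+1))) * (aa n j * aa n (j+1) * aa n j)
              * aa n (j + ((n:ℕ) : ZMod (n+1))) := by rw [← braid_AB]
    rw [eE1, eE2] at t1
    have t2 := braid_conj (u := aa n j * aa n (j + ((n:ℕ) : ZMod (n+1)))) t1
    rw [show (aa n j * aa n (j + ((n:ℕ) : ZMod (n+1))))⁻¹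
        = aa n (j + ((n:ℕ) : ZMod (n+1))) * aa n j from by
      rw [mul_inv_rev, aa_inv, aa_inv]] at t2
    have eE3 : aa n j * aa n (j + ((n:ℕ) : ZMod (n+1))) * pal (j+1) (n-2)
        * (aa n (j + ((n:ℕ) : ZMod (n+1))) * aa n j) = aa n j * Y * aa n j := by
      rw [hYff]; group
    have eE4 : aa n j * aa n (j + ((n:ℕ) : ZMod (n+1)))
        * (aa n (j + ((n:ℕ) : ZMod (n+1))) * (aa n j * aa n (j+1) * aa n j)
          * aa n (j + ((n:ℕ) : ZMod (n+1))))
        * (aa n (j + ((n:ℕ) : ZMod (n+1))) * aa n j) = aa n (j+1) := by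
      simp only [mul_assoc]
      rw [cancel_assoc (aa_mul_self (j + ((n:ℕ) : ZMod (n+1))))]
      rw [cancel_assoc (aa_mul_self (j + ((n:ℕ) : ZMod (n+1))))]
      rw [cancel_assoc (aa_mul_self j), aa_mul_self, mul_one]
    rw [eE3, eE4] at t2
    have t3 := braid_conj (u := aa n j) t2
    rw [aa_inv] at t3
    have eE5 : aa n j * (aa n j * Y * aa n j) * aa n j = Y := by
      simp only [mul_assoc]
      rw [cancel_assoc (aa_mul_self j), aa_mul_self, mul_one]
    rw [eE5] at t3
    have byw : ∀ z, Y * (aa n j * (aa n (j+1) * (aa n j * (Y * z))))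
        = aa n j * (aa n (j+1) * (aa n j * (Y * (aa n j * (aa n (j+1) * (aa n j * z)))))) := by
      intro z
      have := congrArg (fun w => w * z) t3
      simpa [mul_assoc] using this
    rw [ggj, ggj1]
    simp only [mul_assoc]
    rw [cancel_assoc (aa_mul_self j), cancel_assoc hYsq]
    rw [braid_assoc braid_YB (aa n j * (aa n (j+1) * (Y * aa n j)))]
    rw [braid_assoc braid_AB.symm (Y * aa n j)]
    rw [byw (aa n j)]
    rw [aa_mul_self, mul_one]
    rw [braid5 braid_AB (aa_mul_self j) (aa_mul_self (j+1)) (Y * (aa n j * aa n (j+1)))]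

lemma gg_congr {x y : ZMod (n+1)} (h : x = y) : gg n x = gg n y := by rw [h]

lemma mulz {x y : (affineA n).Group} (h : x = y) (z : (affineA n).Group) : x * z = y * z := by
  rw [h]

lemma comm_inv {a g : (affineA n).Group} (h : a * g = g * a) : a * g⁻¹ = g⁻¹ * a :=
  (Commute.inv_right (h : Commute a g) : _)

lemma cast_succ (q : ℕ) : ((q:ℕ) : ZMod (n+1)) + 1 = ((q+1:ℕ) : ZMod (n+1)) := by
  push_cast; ring

lemma aG1n (hn : 2 ≤ n) (q : ℕ) :
    aa n ((q:ℕ) : ZMod (n+1)) * gg n ((q+1:ℕ) : ZMod (n+1))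
      = gg n ((q:ℕ)) * gg n ((q+1:ℕ)) * aa n ((q:ℕ)) := by
  have h := aG1 hn ((q:ℕ) : ZMod (n+1))
  rwa [cast_succ] at h

lemma aG3n (hn : 2 ≤ n) (q : ℕ) :
    aa n ((q+1:ℕ) : ZMod (n+1)) * gg n ((q:ℕ) : ZMod (n+1))
      = gg n ((q:ℕ)) * gg n ((q+1:ℕ)) * aa n ((q+1:ℕ)) := by
  have h := aG3 hn ((q:ℕ) : ZMod (n+1))
  rwa [cast_succ] at h

lemma ggCn (hn : 2 ≤ n) (q : ℕ) :
    gg n ((q:ℕ) : ZMod (n+1)) * gg n ((q+1:ℕ) : ZMod (n+1))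
      = gg n ((q+1:ℕ)) * gg n ((q:ℕ)) := by
  have h := ggC hn ((q:ℕ) : ZMod (n+1))
  rwa [cast_succ] at h

lemma ggFar (hn : 2 ≤ n) (j : ZMod (n+1)) : ∀ d, 1 ≤ d → d + 1 ≤ n →
    gg n j * gg n (j + (d : ZMod (n+1))) = gg n (j + (d : ZMod (n+1))) * gg n j := by
  intro d
  induction d with
  | zero => omega
  | succ m ih =>
    intro _ hd
    rcases Nat.eq_zero_or_pos m with hm | hm
    · subst hm
      have h := ggC hn j
      rwa [gg_congr (show j + 1 = j + ((1:ℕ) : ZMod (n+1)) by push_cast; ring)] at h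
    · -- m ≥ 1
      have hcomm1 := ih (by omega) (by omega)
      -- conjugating letter x = aa (j + ↑(m+1))
      have hfix : aa n (j + ((m+1:ℕ) : ZMod (n+1))) * gg n j
          = gg n j * aa n (j + ((m+1:ℕ) : ZMod (n+1))) := by
        have := aG4 hn j (m-1) (by omega)
        rwa [show m-1+2 = m+1 from by omega] at this
      have hexp : aa n (j + ((m+1:ℕ) : ZMod (n+1))) * gg n (j + ((m:ℕ) : ZMod (n+1)))
            * aa n (j + ((m+1:ℕ) : ZMod (n+1)))
          = gg n (j + ((m:ℕ) : ZMod (n+1))) * gg n (j + ((m+1:ℕ) : ZMod (n+1))) := by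
        have h := aG3 hn (j + ((m:ℕ) : ZMod (n+1)))
        rw [show j + ((m:ℕ) : ZMod (n+1)) + 1 = j + ((m+1:ℕ) : ZMod (n+1)) by push_cast; ring] at h
        rw [h, mul_assoc, aa_mul_self, mul_one]
      have c1 : Commute (gg n j) (gg n (j + ((m:ℕ) : ZMod (n+1)))) := hcomm1
      have cx : Commute (gg n j) (aa n (j + ((m+1:ℕ) : ZMod (n+1)))) := hfix.symm
      have c2 : Commute (gg n j)
          (gg n (j + ((m:ℕ) : ZMod (n+1))) * gg n (j + ((m+1:ℕ) : ZMod (n+1)))) := by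
        rw [← hexp]
        exact (cx.mul_right c1).mul_right cx
      have c3 : Commute (gg n j) (gg n (j + ((m+1:ℕ) : ZMod (n+1)))) := by
        have := (c1.inv_right.mul_right c2)
        rwa [inv_mul_cancel_left] at this
      exact c3

lemma gg_comm_letter (hn : 2 ≤ n) (jn m : ℕ) (hj1 : 1 ≤ jn) (hj : jn ≤ n)
    (hm1 : 1 ≤ m) (hm : m ≤ n) (h : m + 2 ≤ jn ∨ jn + 2 ≤ m) :
    aa n ((m:ℕ) : ZMod (n+1)) * gg n ((jn:ℕ) : ZMod (n+1))
      = gg n ((jn:ℕ) : ZMod (n+1)) * aa n ((m:ℕ) : ZMod (n+1)) := by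
  rcases h with h | h
  · -- m + 2 ≤ jn
    obtain ⟨t, ht3, hte⟩ : ∃ t, t + 3 ≤ n ∧ jn + (t+2) = m + (n+1) :=
      ⟨m + n - jn - 1, by omega, by omega⟩
    have ht := aG4 hn ((jn:ℕ) : ZMod (n+1)) t ht3
    have ecast : ((jn:ℕ) : ZMod (n+1)) + ((t+2:ℕ) : ZMod (n+1)) = ((m:ℕ) : ZMod (n+1)) := by
      have hc := congrArg (Nat.cast : ℕ → ZMod (n+1)) hte
      push_cast at hc
      have h0 := @cast_np1 n
      push_cast
      linear_combination hc + h0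
    rwa [aa_congr ecast] at ht
  · -- jn + 2 ≤ m
    obtain ⟨t, ht3, hte⟩ : ∃ t, t + 3 ≤ n ∧ jn + (t+2) = m :=
      ⟨m - jn - 2, by omega, by omega⟩
    have ht := aG4 hn ((jn:ℕ) : ZMod (n+1)) t ht3
    have ecast : ((jn:ℕ) : ZMod (n+1)) + ((t+2:ℕ) : ZMod (n+1)) = ((m:ℕ) : ZMod (n+1)) := by
      have hc := congrArg (Nat.cast : ℕ → ZMod (n+1)) hte
      push_cast at hc
      push_cast
      linear_combination hc
    rwa [aa_congr ecast] at ht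

lemma gg_comm_gg (hn : 2 ≤ n) (q m : ℕ) (hq1 : 1 ≤ q) (hm : m ≤ n) (h : q < m) :
    gg n ((q:ℕ) : ZMod (n+1)) * gg n ((m:ℕ) : ZMod (n+1))
      = gg n ((m:ℕ) : ZMod (n+1)) * gg n ((q:ℕ) : ZMod (n+1)) := by
  have hf := ggFar hn ((q:ℕ) : ZMod (n+1)) (m-q) (by omega) (by omega)
  rwa [gg_congr (show ((q:ℕ) : ZMod (n+1)) + ((m-q:ℕ) : ZMod (n+1)) = ((m:ℕ) : ZMod (n+1)) by
    rw [Nat.cast_sub (by omega : q ≤ m)]; ring)] at hf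

/-- nat-indexed block of letters, exactly as in the theorem statement -/
def nblk (p len : ℕ) : (affineA n).Group :=
  ((List.range len).map fun t => aa n ((p + t : ℕ))).prod

def nGblk (p len : ℕ) : (affineA n).Group :=
  ((List.range len).map fun t => (gg n ((p + t : ℕ)))⁻¹).prod

lemma nblk_one (p : ℕ) : nblk (n := n) p 1 = aa n ((p:ℕ)) := by
  unfold nblk
  simp [List.range_succ]

lemma nGblk_one (p : ℕ) : nGblk (n := n) p 1 = (gg n ((p:ℕ)))⁻¹ := by
  unfold nGblk
  simp [List.range_succ]

lemma nblk_append (p x y : ℕ) :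
    nblk (n := n) p (x + y) = nblk p x * nblk (p + x) y := by
  unfold nblk
  rw [List.range_add, List.map_append, List.prod_append, List.map_map]
  congr 1
  have hmc : ∀ t ∈ List.range y,
      ((fun t => aa n ((p + t :ℕ))) ∘ (fun u => x + u)) t
        = (fun t => aa n ((p + x + t :ℕ))) t := by
    intro t _
    simp only [Function.comp_apply]
    congr 2
    omega
  rw [List.map_congr_left hmc]

lemma nGblk_append (p x y : ℕ) :
    nGblk (n := n) p (x + y) = nGblk p x * nGblk (p + x) y := by
  unfold nGblk
  rw [List.range_add, List.map_append, List.prod_append, List.map_map]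
  congr 1
  have hmc : ∀ t ∈ List.range y,
      ((fun t => (gg n ((p + t :ℕ)))⁻¹) ∘ (fun u => x + u)) t
        = (fun t => (gg n ((p + x + t :ℕ)))⁻¹) t := by
    intro t _
    simp only [Function.comp_apply]
    congr 3
    omega
  rw [List.map_congr_left hmc]

lemma nblk_succ_head (p l : ℕ) :
    nblk (n := n) p (l + 1) = aa n ((p:ℕ)) * nblk (p+1) l := by
  have h := nblk_append (n := n) p 1 l
  rw [show 1 + l = l + 1 from by omega, nblk_one] at h
  exact h

lemma nGblk_succ_head (p l : ℕ) :
    nGblk (n := n) p (l + 1) = (gg n ((p:ℕ)))⁻¹ * nGblk (p+1) l := by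
  have h := nGblk_append (n := n) p 1 l
  rw [show 1 + l = l + 1 from by omega, nGblk_one] at h
  exact h

lemma nblk_decomp (p x r : ℕ) :
    nblk (n := n) p (x + (1 + (1 + r)))
      = nblk p x * (aa n ((p+x:ℕ)) * (aa n ((p+x+1:ℕ)) * nblk (p+x+1+1) r)) := by
  rw [nblk_append p x, nblk_append (p+x) 1, nblk_append (p+x+1) 1, nblk_one, nblk_one]

lemma comm_nblk (g : (affineA n).Group) (p len : ℕ)
    (h : ∀ t, t < len → g * aa n ((p + t : ℕ)) = aa n ((p + t : ℕ)) * g) :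
    g * nblk p len = nblk p len * g := by
  apply commute_prod
  intro x hx
  simp only [List.mem_map, List.mem_range] at hx
  obtain ⟨t, ht, rfl⟩ := hx
  exact h t ht

lemma comm_nGblk (g : (affineA n).Group) (p len : ℕ)
    (h : ∀ t, t < len → g * gg n ((p + t : ℕ)) = gg n ((p + t : ℕ)) * g) :
    g * nGblk p len = nGblk p len * g := by
  apply commute_prod
  intro x hx
  simp only [List.mem_map, List.mem_range] at hx
  obtain ⟨t, ht, rfl⟩ := hx
  exact comm_inv (h t ht)

lemma aG1'n (hn : 2 ≤ n) (q : ℕ) :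
    aa n ((q:ℕ) : ZMod (n+1)) * (gg n ((q+1:ℕ) : ZMod (n+1)))⁻¹
      = (gg n ((q+1:ℕ) : ZMod (n+1)))⁻¹ * ((gg n ((q:ℕ) : ZMod (n+1)))⁻¹ * aa n ((q:ℕ) : ZMod (n+1))) := by
  have h2 : aa n ((q:ℕ) : ZMod (n+1)) * gg n ((q+1:ℕ) : ZMod (n+1)) * aa n ((q:ℕ) : ZMod (n+1))
      = gg n ((q:ℕ) : ZMod (n+1)) * gg n ((q+1:ℕ) : ZMod (n+1)) := by
    rw [aG1n hn q, mul_assoc, aa_mul_self, mul_one]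
  have h3 := congrArg (fun w => w⁻¹) h2
  simp only [mul_inv_rev, aa_inv, mul_assoc] at h3
  have h4 := congrArg (fun w => w * aa n ((q:ℕ) : ZMod (n+1))) h3
  simp only [mul_assoc] at h4
  rw [aa_mul_self, mul_one] at h4
  exact h4

lemma aG3'n (hn : 2 ≤ n) (q : ℕ) : ∀ z,
    (gg n ((q:ℕ) : ZMod (n+1)))⁻¹ * (aa n ((q+1:ℕ) : ZMod (n+1)) * z)
      = gg n ((q+1:ℕ) : ZMod (n+1)) * (aa n ((q+1:ℕ) : ZMod (n+1)) * ((gg n ((q:ℕ) : ZMod (n+1)))⁻¹ * z)) := by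
  intro z
  have h := aG3n hn q
  -- A1 * g = g * g1 * A1  => g⁻¹ * A1 = g1 * A1 * g⁻¹
  have h2 : (gg n ((q:ℕ) : ZMod (n+1)))⁻¹ * aa n ((q+1:ℕ) : ZMod (n+1))
      = gg n ((q+1:ℕ) : ZMod (n+1)) * aa n ((q+1:ℕ) : ZMod (n+1)) * (gg n ((q:ℕ) : ZMod (n+1)))⁻¹ := by
    calc (gg n ((q:ℕ) : ZMod (n+1)))⁻¹ * aa n ((q+1:ℕ) : ZMod (n+1))
        = (gg n ((q:ℕ) : ZMod (n+1)))⁻¹ * (aa n ((q+1:ℕ) : ZMod (n+1)) * gg n ((q:ℕ) : ZMod (n+1)))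
            * (gg n ((q:ℕ) : ZMod (n+1)))⁻¹ := by group
      _ = (gg n ((q:ℕ) : ZMod (n+1)))⁻¹ * (gg n ((q:ℕ) : ZMod (n+1)) * gg n ((q+1:ℕ) : ZMod (n+1))
            * aa n ((q+1:ℕ) : ZMod (n+1))) * (gg n ((q:ℕ) : ZMod (n+1)))⁻¹ := by rw [h]
      _ = gg n ((q+1:ℕ) : ZMod (n+1)) * aa n ((q+1:ℕ) : ZMod (n+1))
            * (gg n ((q:ℕ) : ZMod (n+1)))⁻¹ := by group
  have h4 := congrArg (fun w => w * z) h2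
  simp only [mul_assoc] at h4
  exact h4

lemma partI (hn : 2 ≤ n) (p k jn : ℕ) (hp : 1 ≤ p) (hk : k ≤ n) (h1 : p ≤ jn) (h2 : jn < k) :
    nblk (n := n) p (k-p+1) * gg n ((jn:ℕ) : ZMod (n+1))
      = gg n ((jn+1:ℕ) : ZMod (n+1)) * nblk p (k-p+1) := by
  have e1 : k-p+1 = (jn-p) + (1 + (1 + (k-jn-1))) := by omega
  have hd := nblk_decomp (n := n) p (jn-p) (k-jn-1)
  rw [show p + (jn-p) = jn from by omega] at hd
  rw [congrArg (nblk (n := n) p) e1, hd]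
  have cT : gg n ((jn:ℕ) : ZMod (n+1)) * nblk (jn+1+1) (k-jn-1)
      = nblk (jn+1+1) (k-jn-1) * gg n ((jn:ℕ) : ZMod (n+1)) := by
    apply comm_nblk
    intro t ht
    exact (gg_comm_letter hn jn (jn+1+1+t) (by omega) (by omega) (by omega) (by omega)
      (Or.inr (by omega))).symm
  have cB : gg n ((jn+1:ℕ) : ZMod (n+1)) * nblk p (jn-p)
      = nblk p (jn-p) * gg n ((jn+1:ℕ) : ZMod (n+1)) := by
    apply comm_nblk
    intro t ht
    exact (gg_comm_letter hn (jn+1) (p+t) (by omega) (by omega) (by omega) (by omega)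
      (Or.inl (by omega))).symm
  have s3 : ∀ z, aa n ((jn+1:ℕ) : ZMod (n+1)) * (gg n ((jn:ℕ) : ZMod (n+1)) * z)
      = gg n ((jn:ℕ) : ZMod (n+1)) * (gg n ((jn+1:ℕ) : ZMod (n+1)) * (aa n ((jn+1:ℕ) : ZMod (n+1)) * z)) := by
    intro z
    have hh := mulz (aG3n hn jn) z
    simp only [mul_assoc] at hh
    exact hh
  have s2 : ∀ z, aa n ((jn:ℕ) : ZMod (n+1)) * (gg n ((jn:ℕ) : ZMod (n+1)) * z)
      = (gg n ((jn:ℕ) : ZMod (n+1)))⁻¹ * (aa n ((jn:ℕ) : ZMod (n+1)) * z) := by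
    intro z
    have hh := mulz (aG2 hn ((jn:ℕ) : ZMod (n+1))) z
    simp only [mul_assoc] at hh
    exact hh
  have s1 : ∀ z, aa n ((jn:ℕ) : ZMod (n+1)) * (gg n ((jn+1:ℕ) : ZMod (n+1)) * z)
      = gg n ((jn:ℕ) : ZMod (n+1)) * (gg n ((jn+1:ℕ) : ZMod (n+1)) * (aa n ((jn:ℕ) : ZMod (n+1)) * z)) := by
    intro z
    have hh := mulz (aG1n hn jn) z
    simp only [mul_assoc] at hh
    exact hh
  simp only [mul_assoc]
  rw [cT.symm, s3, s2, s1, inv_mul_cancel_left,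
    ← swap_assoc cB (aa n ((jn:ℕ) : ZMod (n+1)) * (aa n ((jn+1:ℕ) : ZMod (n+1)) * nblk (jn+1+1) (k-jn-1)))]

lemma partII_aux (hn : 2 ≤ n) (k : ℕ) (hk : k ≤ n) :
    ∀ d q, 1 ≤ q → q + d = k →
    nblk (n := n) q (d+1) * gg n ((k:ℕ) : ZMod (n+1))
      = nGblk q (d+1) * nblk q (d+1) := by
  intro d
  induction d with
  | zero =>
    intro q hq hqk
    have hqe : q = k := by omega
    subst hqe
    rw [nblk_one, nGblk_one]
    exact aG2 hn _
  | succ m ih =>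
    intro q hq hqk
    have cQ : aa n ((q:ℕ) : ZMod (n+1)) * nGblk (q+1+1) m
        = nGblk (q+1+1) m * aa n ((q:ℕ) : ZMod (n+1)) := by
      apply comm_nGblk
      intro t ht
      exact gg_comm_letter hn (q+1+1+t) q (by omega) (by omega) (by omega) (by omega)
        (Or.inl (by omega))
    have swapinv : ∀ z, (gg n ((q+1:ℕ) : ZMod (n+1)))⁻¹ * ((gg n ((q:ℕ) : ZMod (n+1)))⁻¹ * z)
        = (gg n ((q:ℕ) : ZMod (n+1)))⁻¹ * ((gg n ((q+1:ℕ) : ZMod (n+1)))⁻¹ * z) := by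
      intro z
      have hco : Commute (gg n ((q:ℕ) : ZMod (n+1))) (gg n ((q+1:ℕ) : ZMod (n+1))) := ggCn hn q
      exact swap_assoc (hco.inv_inv.symm) z
    have e1a : ∀ z, aa n ((q:ℕ) : ZMod (n+1)) * ((gg n ((q+1:ℕ) : ZMod (n+1)))⁻¹ * z)
        = (gg n ((q+1:ℕ) : ZMod (n+1)))⁻¹ * ((gg n ((q:ℕ) : ZMod (n+1)))⁻¹
            * (aa n ((q:ℕ) : ZMod (n+1)) * z)) := by
      intro z
      have hh := mulz (aG1'n hn q) z
      simp only [mul_assoc] at hh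
      exact hh
    rw [nblk_succ_head q (m+1), mul_assoc, ih (q+1) (by omega) (by omega),
      nGblk_succ_head (q+1) m]
    simp only [mul_assoc]
    rw [e1a, swap_assoc cQ, swapinv, nGblk_succ_head q (m+1), nGblk_succ_head (q+1) m]
    simp only [mul_assoc]

lemma partIV_aux (hn : 2 ≤ n) (k : ℕ) (hk : k ≤ n) :
    ∀ d q, 1 ≤ q → q + d = k →
    gg n ((q:ℕ) : ZMod (n+1)) * nblk (n := n) q (d+1)
      = nblk q (d+1) * nGblk q (d+1) := by
  intro d
  induction d with
  | zero =>
    intro q hq hqk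
    rw [nblk_one, nGblk_one]
    exact aG2' hn _
  | succ m ih =>
    intro q hq hqk
    have s0 : ∀ z, gg n ((q:ℕ) : ZMod (n+1)) * (aa n ((q:ℕ) : ZMod (n+1)) * z)
        = aa n ((q:ℕ) : ZMod (n+1)) * ((gg n ((q:ℕ) : ZMod (n+1)))⁻¹ * z) := by
      intro z
      have hh := mulz (aG2' hn ((q:ℕ) : ZMod (n+1))) z
      simp only [mul_assoc] at hh
      exact hh
    have cP : (gg n ((q:ℕ) : ZMod (n+1)))⁻¹ * nblk (q+1+1) m
        = nblk (q+1+1) m * (gg n ((q:ℕ) : ZMod (n+1)))⁻¹ := by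
      apply comm_nblk
      intro t ht
      exact (comm_inv (gg_comm_letter hn q (q+1+1+t) (by omega) (by omega) (by omega) (by omega)
        (Or.inr (by omega)))).symm
    have cG : (gg n ((q:ℕ) : ZMod (n+1)))⁻¹ * nGblk (q+1) (m+1)
        = nGblk (q+1) (m+1) * (gg n ((q:ℕ) : ZMod (n+1)))⁻¹ := by
      apply comm_nGblk
      intro t ht
      have hco : Commute (gg n ((q:ℕ) : ZMod (n+1))) (gg n ((q+1+t:ℕ) : ZMod (n+1))) :=
        gg_comm_gg hn q (q+1+t) (by omega) (by omega) (by omega)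
      exact hco.inv_left
    have IH2 := ih (q+1) (by omega) (by omega)
    rw [nblk_succ_head (q+1) m] at IH2
    have sIH : ∀ z, gg n ((q+1:ℕ) : ZMod (n+1)) * (aa n ((q+1:ℕ) : ZMod (n+1)) * (nblk (q+1+1) m * z))
        = aa n ((q+1:ℕ) : ZMod (n+1)) * (nblk (q+1+1) m * (nGblk (q+1) (m+1) * z)) := by
      intro z
      have hh := mulz IH2 z
      simp only [mul_assoc] at hh
      exact hh
    rw [nblk_succ_head q (m+1)]
    simp only [mul_assoc]
    rw [s0, nblk_succ_head (q+1) m]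
    simp only [mul_assoc]
    rw [aG3'n hn q, cP, sIH, ← cG, nGblk_succ_head q (m+1)]

end AProof

open AProof in
/-- Commutation relations between an echelon block `Δ = a_p a_{p+1} ⋯ a_k` (`p < k ≤ n`)
and the elements `gⱼ`. -/
theorem stmt12 (n p k : ℕ) (hn : 2 ≤ n) (hp : 1 ≤ p) (hpk : p < k) (hk : k ≤ n)
    (Δ G' : (affineA n).Group)
    (hΔ : Δ = ((List.range (k - p + 1)).map fun t => aa n ((p + t : ℕ))).prod)
    (hG' : G' = ((List.range (k - p + 1)).map fun t => (gg n ((p + t : ℕ)))⁻¹).prod) :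
    (∀ j : ℕ, p ≤ j → j < k → Δ * gg n (j : ZMod (n + 1)) = gg n ((j + 1 : ℕ)) * Δ) ∧
    (Δ * gg n (k : ZMod (n + 1)) = G' * Δ) ∧
    (∀ j : ℕ, p < j → j ≤ k → gg n (j : ZMod (n + 1)) * Δ = Δ * gg n ((j : ZMod (n + 1)) - 1)) ∧
    (gg n (p : ZMod (n + 1)) * Δ = Δ * G') ∧
    (∀ j : ℕ, 1 ≤ j → j ≤ n → (j + 1 < p ∨ k + 1 < j) →
      gg n (j : ZMod (n + 1)) * Δ = Δ * gg n (j : ZMod (n + 1))) := by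
  have hΔ' : Δ = nblk (n := n) p (k - p + 1) := hΔ
  have hG'' : G' = nGblk (n := n) p (k - p + 1) := hG'
  refine ⟨?_, ?_, ?_, ?_, ?_⟩
  · intro j hj1 hj2
    rw [hΔ']
    exact partI hn p k j hp hk hj1 hj2
  · rw [hΔ', hG'']
    have h := partII_aux hn k hk (k - p) p hp (by omega)
    exact h
  · intro j hj1 hj2
    rw [hΔ']
    have h := partI hn p k (j-1) hp hk (by omega) (by omega)
    rw [show ((j:ℕ) : ZMod (n+1)) - 1 = ((j-1:ℕ) : ZMod (n+1)) by
      rw [Nat.cast_sub (by omega : 1 ≤ j)]; push_cast; ring]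
    rw [show ((j:ℕ) : ZMod (n+1)) = ((j-1+1:ℕ) : ZMod (n+1)) by congr 1; omega]
    exact h.symm
  · rw [hΔ', hG'']
    have h := partIV_aux hn k hk (k - p) p hp (by omega)
    exact h
  · intro j hj1 hj2 hcond
    rw [hΔ']
    apply comm_nblk
    intro t ht
    exact (gg_comm_letter hn j (p+t) hj1 hj2 (by omega) (by omega) (by omega)).symm
end
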